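/- arXiv:2404.13291 — 8 statements merged into one kernel-verified Lean document; each statement's English description precedes it below -/
import Mathlib

section
/- Let F be a pricing function with marginal-rate function G and let f>0 be the unit trading fee. Fix α>0 and β>0 with G(β)/α < 1/(1+f). Then there exists a unique pair (d^A,d^B) with d^A ∈ (0,1) and d^B < 0 satisfying the system of equations (1−d^A)/(1−d^B) = (1/β)·G⁻¹(α/(1+f)) and F(β(1−d^A), 1−d^B) = F(β, 1), where G⁻¹ denotes the inverse function of G. -/
open Set Filter Topology

/-- A pricing function `F` with partial derivatives `Fx`, `Fy` and marginal-rate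
function `G` (with derivative `G'`), as in Assumption 1 (Pricing Formula):
(i) `F` is continuously differentiable with positive partial derivatives;
(ii) `Fx/Fy = G(x/y)` where `G` is continuously differentiable, strictly
decreasing (negative derivative), with `G → ∞` at `0⁺` and `G → 0` at `∞`;
(iii) homogeneity of level sets. -/
structure PricingFunction (F Fx Fy : ℝ → ℝ → ℝ) (G G' : ℝ → ℝ) : Prop where
  partialX : ∀ x y : ℝ, 0 < x → 0 < y → HasDerivAt (fun t => F t y) (Fx x y) x
  partialY : ∀ x y : ℝ, 0 < x → 0 < y → HasDerivAt (fun t => F x t) (Fy x y) y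
  contX : ContinuousOn (fun p : ℝ × ℝ => Fx p.1 p.2) (Ioi 0 ×ˢ Ioi 0)
  contY : ContinuousOn (fun p : ℝ × ℝ => Fy p.1 p.2) (Ioi 0 ×ˢ Ioi 0)
  posX : ∀ x y : ℝ, 0 < x → 0 < y → 0 < Fx x y
  posY : ∀ x y : ℝ, 0 < x → 0 < y → 0 < Fy x y
  ratio : ∀ x y : ℝ, 0 < x → 0 < y → Fx x y / Fy x y = G (x / y)
  derivG : ∀ z : ℝ, 0 < z → HasDerivAt G (G' z) z
  contG' : ContinuousOn G' (Ioi 0)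
  negG' : ∀ z : ℝ, 0 < z → G' z < 0
  tendstoG0 : Tendsto G (𝓝[>] (0:ℝ)) atTop
  tendstoGtop : Tendsto G atTop (𝓝 0)
  homog : ∀ x y x' y' c : ℝ, 0 < x → 0 < y → 0 < x' → 0 < y' → 0 < c →
    F x y = F x' y' → F (c * x) (c * y) = F (c * x') (c * y')

/-- Proposition 1(i), first case: if `G(β)/α < 1/(1+f)`, the system
`(1−dᴬ)/(1−dᴮ) = (1/β)·G⁻¹(α/(1+f))`, `F(β(1−dᴬ), 1−dᴮ) = F(β,1)` admits a
unique solution with `dᴬ ∈ (0,1)` and `dᴮ < 0`. -/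
theorem stmt0 (F Fx Fy : ℝ → ℝ → ℝ) (G G' Ginv : ℝ → ℝ)
    (hF : PricingFunction F Fx Fy G G')
    (hGinv : ∀ u : ℝ, 0 < u → 0 < Ginv u ∧ G (Ginv u) = u)
    (f : ℝ) (hf : 0 < f) (α β : ℝ) (hα : 0 < α) (hβ : 0 < β)
    (hreg : G β / α < 1 / (1 + f)) :
    ∃! d : ℝ × ℝ, d.1 ∈ Ioo (0:ℝ) 1 ∧ d.2 < 0 ∧
      (1 - d.1) / (1 - d.2) = (1 / β) * Ginv (α / (1 + f)) ∧
      F (β * (1 - d.1)) (1 - d.2) = F β 1 := by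
  have hf1 : (0:ℝ) < 1 + f := by linarith
  have hu : 0 < α / (1 + f) := div_pos hα hf1
  obtain ⟨hz, hGz⟩ := hGinv _ hu
  set z := Ginv (α / (1 + f)) with hzdef
  -- G is strictly antitone on (0,∞)
  have hGanti : StrictAntiOn G (Ioi 0) := by
    apply strictAntiOn_of_deriv_neg (convex_Ioi 0)
    · intro x hx; exact (hF.derivG x hx).continuousAt.continuousWithinAt
    · intro x hx
      rw [interior_Ioi] at hx
      rw [(hF.derivG x hx).deriv]; exact hF.negG' x hx
  -- z < β
  have hGβ : G β < G z := by
    rw [hGz]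
    rw [div_lt_div_iff₀ hα hf1] at hreg
    rw [lt_div_iff₀ hf1]
    linarith
  have hzβ : z < β := by
    by_contra h
    push_neg at h
    rcases eq_or_lt_of_le h with h' | h'
    · rw [h'] at hGβ; exact lt_irrefl _ hGβ
    · have := hGanti (mem_Ioi.2 hβ) (mem_Ioi.2 hz) h'
      linarith
  -- strict monotonicity of F in each variable
  have monoX : ∀ y : ℝ, 0 < y → StrictMonoOn (fun x => F x y) (Ioi 0) := by
    intro y hy
    apply strictMonoOn_of_deriv_pos (convex_Ioi 0)
    · intro x hx; exact (hF.partialX x y hx hy).continuousAt.continuousWithinAt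
    · intro x hx
      rw [interior_Ioi] at hx
      rw [(hF.partialX x y hx hy).deriv]; exact hF.posX x y hx hy
  have monoY : ∀ x : ℝ, 0 < x → StrictMonoOn (fun y => F x y) (Ioi 0) := by
    intro x hx
    apply strictMonoOn_of_deriv_pos (convex_Ioi 0)
    · intro y hy; exact (hF.partialY x y hx hy).continuousAt.continuousWithinAt
    · intro y hy
      rw [interior_Ioi] at hy
      rw [(hF.partialY x y hx hy).deriv]; exact hF.posY x y hx hy
  -- ψ(t) = F (z t) t is strictly increasing
  have hpsi : ∀ s t : ℝ, 0 < s → s < t → F (z * s) s < F (z * t) t := by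
    intro s t hs hst
    have ht : 0 < t := hs.trans hst
    have hzs : 0 < z * s := mul_pos hz hs
    have hzt : 0 < z * t := mul_pos hz ht
    have h1 : F (z * s) s < F (z * t) s :=
      monoX s hs hzs hzt (by exact mul_lt_mul_of_pos_left hst hz)
    have h2 : F (z * t) s < F (z * t) t := monoY (z * t) hzt hs ht hst
    linarith
  -- joint continuity of F on the open positive quadrant
  have hFcont : ∀ x0 y0 : ℝ, 0 < x0 → 0 < y0 →
      ContinuousAt (fun p : ℝ × ℝ => F p.1 p.2) (x0, y0) := by
    intro x0 y0 hx0 hy0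
    have hKsub : (Icc (x0/2) (2*x0) ×ˢ Icc (y0/2) (2*y0) : Set (ℝ × ℝ)) ⊆ Ioi 0 ×ˢ Ioi 0 := by
      rintro ⟨a, b⟩ ⟨ha, hb⟩
      exact ⟨by simp only [mem_Ioi]; nlinarith [ha.1], by simp only [mem_Ioi]; nlinarith [hb.1]⟩
    have hKcomp : IsCompact (Icc (x0/2) (2*x0) ×ˢ Icc (y0/2) (2*y0) : Set (ℝ × ℝ)) :=
      isCompact_Icc.prod isCompact_Icc
    obtain ⟨M, hM⟩ := hKcomp.exists_bound_of_continuousOn (hF.contX.mono hKsub)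
    have hx0s : x0 ∈ Icc (x0/2) (2*x0) := ⟨by linarith, by linarith⟩
    have key : ∀ y ∈ Icc (y0/2) (2*y0), ∀ x ∈ Icc (x0/2) (2*x0),
        ‖F x y - F x0 y‖ ≤ M * ‖x - x0‖ := by
      intro y hy x hx
      have hypos : 0 < y := by nlinarith [hy.1]
      exact Convex.norm_image_sub_le_of_norm_hasDerivWithin_le
        (fun x' hx' => ((hF.partialX x' y (by nlinarith [hx'.1]) hypos).hasDerivWithinAt))
        (fun x' hx' => hM (x', y) ⟨hx', hy⟩) (convex_Icc _ _) hx0s hx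
    have h2 : Tendsto (fun p : ℝ × ℝ => F x0 p.2) (𝓝 (x0, y0)) (𝓝 (F x0 y0)) :=
      ((hF.partialY x0 y0 hx0 hy0).continuousAt).tendsto.comp continuous_snd.continuousAt
    have h1 : Tendsto (fun p : ℝ × ℝ => F p.1 p.2 - F x0 p.2) (𝓝 (x0, y0)) (𝓝 0) := by
      apply squeeze_zero_norm'
      · have hKnhds : (Icc (x0/2) (2*x0) ×ˢ Icc (y0/2) (2*y0) : Set (ℝ × ℝ)) ∈ 𝓝 (x0, y0) := by
          apply prod_mem_nhds <;> apply Icc_mem_nhds <;> linarith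
        filter_upwards [hKnhds] with p hp
        exact key p.2 hp.2 p.1 hp.1
      · have ht : Tendsto (fun p : ℝ × ℝ => p.1 - x0) (𝓝 (x0, y0)) (𝓝 (x0 - x0)) :=
          (continuous_fst.sub continuous_const).continuousAt
        rw [sub_self] at ht
        have := (ht.norm).const_mul M
        simpa using this
    have hsum := h1.add h2
    rw [zero_add] at hsum
    have : (fun p : ℝ × ℝ => F p.1 p.2 - F x0 p.2 + F x0 p.2) = fun p : ℝ × ℝ => F p.1 p.2 := by
      funext p; ring
    rwa [this] at hsum
  -- existence via IVT on [1, T]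
  set T : ℝ := β / z + 1 with hTdef
  have hT1 : (1:ℝ) < T := by
    have : 0 < β / z := div_pos hβ hz
    rw [hTdef]; linarith
  have hψcont : ContinuousOn (fun t => F (z * t) t) (Icc 1 T) := by
    intro t ht
    have htpos : 0 < t := lt_of_lt_of_le one_pos ht.1
    have : ContinuousAt (fun t : ℝ => ((z * t, t) : ℝ × ℝ)) t :=
      ((continuous_const.mul continuous_id).prodMk continuous_id).continuousAt
    have hc := ContinuousAt.comp (g := fun p : ℝ × ℝ => F p.1 p.2)
      (f := fun t : ℝ => ((z * t, t) : ℝ × ℝ)) (hFcont (z * t) t (mul_pos hz htpos) htpos) this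
    exact hc.continuousWithinAt
  have hψ1 : F (z * 1) 1 < F β 1 :=
    monoX 1 one_pos (by simpa using hz) hβ (by simpa using hzβ)
  have hTpos : 0 < T := lt_trans one_pos hT1
  have hzT : β < z * T := by
    have : z * T = β + z := by
      rw [hTdef, mul_add, mul_one, mul_div_cancel₀ β (ne_of_gt hz)]
    linarith
  have hψT : F β 1 < F (z * T) T := by
    have h1 : F β 1 < F β T := monoY β hβ (mem_Ioi.2 one_pos) hTpos hT1
    have h2 : F β T < F (z * T) T := monoX T hTpos hβ (mul_pos hz hTpos) hzT
    linarith
  obtain ⟨t0, ht0mem, ht0⟩ :=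
    intermediate_value_Icc (le_of_lt hT1) hψcont ⟨le_of_lt hψ1, le_of_lt hψT⟩
  have ht0pos : 0 < t0 := lt_of_lt_of_le one_pos ht0mem.1
  have ht0gt1 : 1 < t0 := by
    rcases lt_or_eq_of_le ht0mem.1 with h | h
    · exact h
    · exfalso; rw [← h] at ht0; simp only at ht0; linarith [hψ1, ht0.ge, ht0.le]
  have hzt0 : z * t0 < β := by
    by_contra h
    push_neg at h
    have hb : F β 1 < F β t0 := monoY β hβ (mem_Ioi.2 one_pos) ht0pos ht0gt1
    have hb2 : F β t0 ≤ F (z * t0) t0 :=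
      (monoX t0 ht0pos).monotoneOn hβ (mul_pos hz ht0pos) h
    simp only at ht0
    linarith
  have hzt0pos : 0 < z * t0 := mul_pos hz ht0pos
  have ht0ne : t0 ≠ 0 := ne_of_gt ht0pos
  have hβne : β ≠ 0 := ne_of_gt hβ
  refine ⟨(1 - z * t0 / β, 1 - t0), ⟨?_, ?_, ?_, ?_⟩, ?_⟩
  · constructor
    · have : z * t0 / β < 1 := (div_lt_one hβ).2 hzt0
      simpa using by linarith
    · have : 0 < z * t0 / β := div_pos hzt0pos hβ
      simpa using by linarith
  · simpa using by linarith
  · show (1 - (1 - z * t0 / β)) / (1 - (1 - t0)) = 1 / β * z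
    rw [sub_sub_cancel, sub_sub_cancel, div_div, mul_comm β t0, ← div_div, mul_div_cancel_right₀ z ht0ne]
    ring
  · show F (β * (1 - (1 - z * t0 / β))) (1 - (1 - t0)) = F β 1
    have e1 : β * (1 - (1 - z * t0 / β)) = z * t0 := by field_simp; ring
    have e2 : 1 - (1 - t0) = t0 := by ring
    rw [e1, e2]
    exact ht0
  · rintro ⟨d1, d2⟩ ⟨hmem, hneg, hratio, hFeq⟩
    simp only at hmem hneg hratio hFeq ⊢
    have ht' : (0:ℝ) < 1 - d2 := by linarith
    have hne2 : (1 : ℝ) - d2 ≠ 0 := ne_of_gt ht'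
    have hratio' : β * (1 - d1) = z * (1 - d2) := by
      rw [div_eq_iff hne2] at hratio
      field_simp at hratio
      linarith
    have hFeq' : F (z * (1 - d2)) (1 - d2) = F β 1 := by rw [← hratio']; exact hFeq
    have hkey : 1 - d2 = t0 := by
      rcases lt_trichotomy (1 - d2) t0 with h | h | h
      · exfalso
        have := hpsi _ _ ht' h
        simp only at ht0
        rw [hFeq', ht0] at this
        exact lt_irrefl _ this
      · exact h
      · exfalso
        have := hpsi _ _ ht0pos h
        simp only at ht0
        rw [hFeq', ht0] at this
        exact lt_irrefl _ this
    have hd2 : d2 = 1 - t0 := by linarith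
    have hd1 : d1 = 1 - z * t0 / β := by
      rw [hkey] at hratio'
      field_simp
      linarith
    exact Prod.ext hd1 hd2
end

section
/- Let F be a pricing function with marginal-rate function G and let f>0 be the unit trading fee. Fix α>0 and β>0 with G(β)/α > 1+f. Then there exists a unique pair (d^A,d^B) with d^A < 0 and d^B ∈ (0,1) satisfying the system of equations (1−d^A)/(1−d^B) = (1/β)·G⁻¹(α(1+f)) and F(β(1−d^A), 1−d^B) = F(β, 1), where G⁻¹ denotes the inverse function of G. -/
open Set Filter Topology

lemma abs_sub_le_of_mem_uIcc {a x u : ℝ} (h : u ∈ Set.uIcc a x) : |u - a| ≤ |x - a| := by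
  rw [Set.mem_uIcc] at h
  rcases h with ⟨h1, h2⟩ | ⟨h1, h2⟩ <;> rw [abs_le] <;> constructor <;>
    linarith [le_abs_self (x - a), neg_abs_le (x - a), abs_nonneg (x - a)]

lemma hasFDerivAt_of_partials {F Fx Fy : ℝ → ℝ → ℝ}
    (partialX : ∀ x y : ℝ, 0 < x → 0 < y → HasDerivAt (fun t => F t y) (Fx x y) x)
    (partialY : ∀ x y : ℝ, 0 < x → 0 < y → HasDerivAt (fun t => F x t) (Fy x y) y)
    (contX : ContinuousOn (fun p : ℝ × ℝ => Fx p.1 p.2) (Ioi 0 ×ˢ Ioi 0))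
    (contY : ContinuousOn (fun p : ℝ × ℝ => Fy p.1 p.2) (Ioi 0 ×ˢ Ioi 0))
    {a b : ℝ} (ha : 0 < a) (hb : 0 < b) :
    HasFDerivAt (fun p : ℝ × ℝ => F p.1 p.2)
      (Fx a b • ContinuousLinearMap.fst ℝ ℝ ℝ + Fy a b • ContinuousLinearMap.snd ℝ ℝ ℝ)
      (a, b) := by
  rw [hasFDerivAt_iff_isLittleO_nhds_zero]
  rw [Asymptotics.isLittleO_iff]
  intro ε hε
  have hopen : IsOpen ((Ioi (0:ℝ)) ×ˢ (Ioi (0:ℝ))) := isOpen_Ioi.prod isOpen_Ioi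
  have hmem : (a, b) ∈ (Ioi (0:ℝ)) ×ˢ (Ioi (0:ℝ)) := ⟨ha, hb⟩
  have hcX : ContinuousAt (fun p : ℝ × ℝ => Fx p.1 p.2) (a, b) :=
    contX.continuousAt (hopen.mem_nhds hmem)
  have hcY : ContinuousAt (fun p : ℝ × ℝ => Fy p.1 p.2) (a, b) :=
    contY.continuousAt (hopen.mem_nhds hmem)
  have hεX : ∀ᶠ p : ℝ × ℝ in 𝓝 (a, b), |Fx p.1 p.2 - Fx a b| ≤ ε / 2 := by
    have := hcX.eventually (Metric.closedBall_mem_nhds (Fx a b) (by positivity : (0:ℝ) < ε / 2))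
    filter_upwards [this] with p hp
    simpa [Real.dist_eq, Metric.mem_closedBall] using hp
  have hεY : ∀ᶠ p : ℝ × ℝ in 𝓝 (a, b), |Fy p.1 p.2 - Fy a b| ≤ ε / 2 := by
    have := hcY.eventually (Metric.closedBall_mem_nhds (Fy a b) (by positivity : (0:ℝ) < ε / 2))
    filter_upwards [this] with p hp
    simpa [Real.dist_eq, Metric.mem_closedBall] using hp
  rw [Metric.eventually_nhds_iff_ball] at hεX hεY
  obtain ⟨δ₁, hδ₁, hX⟩ := hεX
  obtain ⟨δ₂, hδ₂, hY⟩ := hεY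
  set δ : ℝ := min (min δ₁ δ₂) (min a b) with hδdef
  have hδ : 0 < δ := by positivity
  have key : ∀ q : ℝ × ℝ, ‖q‖ < δ →
      ‖F (a + q.1) (b + q.2) - F a b -
        (Fx a b • ContinuousLinearMap.fst ℝ ℝ ℝ + Fy a b • ContinuousLinearMap.snd ℝ ℝ ℝ) q‖
        ≤ ε * ‖q‖ := by
    intro q hq
    have hq1 : |q.1| < δ := lt_of_le_of_lt (by simpa [Real.norm_eq_abs] using norm_fst_le q) hq
    have hq2 : |q.2| < δ := lt_of_le_of_lt (by simpa [Real.norm_eq_abs] using norm_snd_le q) hq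
    have hball : ∀ u v : ℝ, |u - a| < δ → |v - b| < δ → (u, v) ∈ Metric.ball ((a:ℝ), (b:ℝ)) δ₁ ∩ Metric.ball ((a:ℝ), (b:ℝ)) δ₂ ∧ 0 < u ∧ 0 < v := by
      intro u v hu hv
      have h1 : dist (u, v) ((a:ℝ), (b:ℝ)) < δ := by
        rw [Prod.dist_eq]
        simp only [Real.dist_eq]
        exact max_lt hu hv
      refine ⟨⟨?_, ?_⟩, ?_, ?_⟩
      · exact lt_of_lt_of_le h1 (le_trans (min_le_left _ _) (min_le_left _ _))
      · exact lt_of_lt_of_le h1 (le_trans (min_le_left _ _) (min_le_right _ _))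
      · have : δ ≤ a := le_trans (min_le_right _ _) (min_le_left _ _)
        have := abs_lt.1 hu
        linarith [this.1]
      · have : δ ≤ b := le_trans (min_le_right _ _) (min_le_right _ _)
        have := abs_lt.1 hv
        linarith [(abs_lt.1 hv).1]
    -- term 1 : along x at height b + q.2
    set x := a + q.1
    set y := b + q.2
    have hyb : |y - b| < δ := by simpa [y] using hq2
    have hy0 : 0 < y := (hball a y (by simpa using hδ) hyb).2.2
    have t1 : ‖(F x y - Fx a b * x) - (F a y - Fx a b * a)‖ ≤ ε / 2 * ‖x - a‖ := by
      apply Convex.norm_image_sub_le_of_norm_hasDerivWithin_le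
          (f := fun u => F u y - Fx a b * u) (f' := fun u => Fx u y - Fx a b)
          (s := uIcc a x) ?_ ?_ (convex_uIcc a x) (left_mem_uIcc) (right_mem_uIcc)
      · intro u hu
        have hua : |u - a| < δ := by
          calc |u - a| ≤ |x - a| := abs_sub_le_of_mem_uIcc hu
          _ < δ := by simpa [x] using hq1
        obtain ⟨_, hu0, _⟩ := hball u y hua hyb
        exact (((partialX u y hu0 hy0).sub ((hasDerivAt_id u).const_mul (Fx a b))).congr_deriv (by ring)).hasDerivWithinAt
      · intro u hu
        have hua : |u - a| < δ := by
          calc |u - a| ≤ |x - a| := abs_sub_le_of_mem_uIcc hu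
          _ < δ := by simpa [x] using hq1
        obtain ⟨⟨hb1, _⟩, hu0, _⟩ := hball u y hua hyb
        have := hX (u, y) hb1
        simpa [Real.norm_eq_abs] using this
    have t2 : ‖(F a y - Fy a b * y) - (F a b - Fy a b * b)‖ ≤ ε / 2 * ‖y - b‖ := by
      apply Convex.norm_image_sub_le_of_norm_hasDerivWithin_le
          (f := fun v => F a v - Fy a b * v) (f' := fun v => Fy a v - Fy a b)
          (s := uIcc b y) ?_ ?_ (convex_uIcc b y) (left_mem_uIcc) (right_mem_uIcc)
      · intro v hv
        have hvb : |v - b| < δ := by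
          exact lt_of_le_of_lt (abs_sub_le_of_mem_uIcc hv) hyb
        obtain ⟨_, _, hv0⟩ := hball a v (by simpa using hδ) hvb
        exact (((partialY a v ha hv0).sub ((hasDerivAt_id v).const_mul (Fy a b))).congr_deriv (by ring)).hasDerivWithinAt
      · intro v hv
        have hvb : |v - b| < δ := by
          exact lt_of_le_of_lt (abs_sub_le_of_mem_uIcc hv) hyb
        obtain ⟨⟨_, hb2⟩, _, hv0⟩ := hball a v (by simpa using hδ) hvb
        have := hY (a, v) hb2
        simpa [Real.norm_eq_abs] using this
    have expand : F (a + q.1) (b + q.2) - F a b -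
        (Fx a b • ContinuousLinearMap.fst ℝ ℝ ℝ + Fy a b • ContinuousLinearMap.snd ℝ ℝ ℝ) q
        = ((F x y - Fx a b * x) - (F a y - Fx a b * a)) + ((F a y - Fy a b * y) - (F a b - Fy a b * b)) := by
      simp only [ContinuousLinearMap.add_apply, ContinuousLinearMap.coe_smul',
        Pi.smul_apply, ContinuousLinearMap.coe_fst', ContinuousLinearMap.coe_snd',
        smul_eq_mul, x, y]
      ring
    rw [expand]
    calc ‖_ + _‖ ≤ ‖(F x y - Fx a b * x) - (F a y - Fx a b * a)‖ + ‖(F a y - Fy a b * y) - (F a b - Fy a b * b)‖ := norm_add_le _ _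
      _ ≤ ε / 2 * ‖x - a‖ + ε / 2 * ‖y - b‖ := add_le_add t1 t2
      _ ≤ ε / 2 * ‖q‖ + ε / 2 * ‖q‖ := by
          gcongr
          · simpa [x, Real.norm_eq_abs] using (by simpa [Real.norm_eq_abs] using norm_fst_le q : |q.1| ≤ ‖q‖)
          · simpa [y, Real.norm_eq_abs] using (by simpa [Real.norm_eq_abs] using norm_snd_le q : |q.2| ≤ ‖q‖)
      _ = ε * ‖q‖ := by ring
  rw [Metric.eventually_nhds_iff_ball]
  exact ⟨δ, hδ, fun q hq => key q (by simpa [Metric.mem_ball, dist_zero_right] using hq)⟩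

/-- Proposition 1(i), second case: if `G(β)/α > 1+f`, the system
`(1−dᴬ)/(1−dᴮ) = (1/β)·G⁻¹(α(1+f))`, `F(β(1−dᴬ), 1−dᴮ) = F(β,1)` admits a
unique solution with `dᴬ < 0` and `dᴮ ∈ (0,1)`. -/
theorem stmt1 (F Fx Fy : ℝ → ℝ → ℝ) (G G' Ginv : ℝ → ℝ)
    (hF : PricingFunction F Fx Fy G G')
    (hGinv : ∀ u : ℝ, 0 < u → 0 < Ginv u ∧ G (Ginv u) = u)
    (f : ℝ) (hf : 0 < f) (α β : ℝ) (hα : 0 < α) (hβ : 0 < β)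
    (hreg : 1 + f < G β / α) :
    ∃! d : ℝ × ℝ, d.1 < 0 ∧ d.2 ∈ Ioo (0:ℝ) 1 ∧
      (1 - d.1) / (1 - d.2) = (1 / β) * Ginv (α * (1 + f)) ∧
      F (β * (1 - d.1)) (1 - d.2) = F β 1 := by
  obtain ⟨hz0, hGz⟩ := hGinv (α * (1 + f)) (by positivity)
  set z : ℝ := Ginv (α * (1 + f)) with hzdef
  -- G is positive on (0, ∞)
  have hGpos : ∀ w : ℝ, 0 < w → 0 < G w := by
    intro w hw
    have h := hF.ratio w 1 hw one_pos
    rw [div_one] at h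
    rw [← h]
    exact div_pos (hF.posX w 1 hw one_pos) (hF.posY w 1 hw one_pos)
  have hGcont : ContinuousOn G (Ioi 0) :=
    fun w hw => (hF.derivG w hw).continuousAt.continuousWithinAt
  -- G strictly decreasing
  have hanti : StrictAntiOn G (Ioi 0) := by
    apply strictAntiOn_of_deriv_neg (convex_Ioi 0) hGcont
    intro w hw
    rw [interior_Ioi] at hw
    rw [(hF.derivG w hw).deriv]
    exact hF.negG' w hw
  have huβ : α * (1 + f) < G β := by
    have := (lt_div_iff₀ hα).1 hreg
    nlinarith
  have hβz : β < z := by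
    by_contra hcon
    push_neg at hcon
    rcases eq_or_lt_of_le hcon with h1 | h1
    · rw [h1] at hGz; linarith
    · have := hanti (mem_Ioi.2 hz0) (mem_Ioi.2 hβ) h1
      linarith
  -- the integrand
  set g : ℝ → ℝ := fun s => G s / (s * G s + 1) with hgdef
  have hden : ∀ s : ℝ, 0 < s → 0 < s * G s + 1 := by
    intro s hs; have := hGpos s hs; nlinarith
  have hgpos : ∀ s : ℝ, 0 < s → 0 < g s :=
    fun s hs => div_pos (hGpos s hs) (hden s hs)
  have hgcont : ContinuousOn g (Ioi 0) := by
    apply ContinuousOn.div hGcont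
    · exact (continuousOn_id.mul hGcont).add continuousOn_const
    · exact fun s hs => (hden s hs).ne'
  have huIcc : ∀ w : ℝ, 0 < w → uIcc β w ⊆ Ioi (0:ℝ) := by
    intro w hw x hx
    rw [Set.mem_uIcc] at hx
    rcases hx with ⟨h1, _⟩ | ⟨h1, _⟩ <;> [exact lt_of_lt_of_le hβ h1; exact lt_of_lt_of_le hw h1]
  have hgint : ∀ w : ℝ, 0 < w → IntervalIntegrable g MeasureTheory.volume β w :=
    fun w hw => (hgcont.mono (huIcc w hw)).intervalIntegrable
  set T : ℝ → ℝ := fun w => ∫ s in β..w, g s with hTdef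
  have hTderiv : ∀ w : ℝ, 0 < w → HasDerivAt T (g w) w := by
    intro w hw
    exact intervalIntegral.integral_hasDerivAt_right (hgint w hw)
      (hgcont.stronglyMeasurableAtFilter isOpen_Ioi w hw)
      (hgcont.continuousAt (isOpen_Ioi.mem_nhds hw))
  set t : ℝ → ℝ := fun w => Real.exp (-T w) with htdef
  have htpos : ∀ w : ℝ, 0 < t w := fun w => Real.exp_pos _
  have htderiv : ∀ w : ℝ, 0 < w → HasDerivAt t (-g w * t w) w := by
    intro w hw
    have := ((hTderiv w hw).neg).exp
    simpa [htdef, mul_comm] using this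
  have htβ : t β = 1 := by
    simp [htdef, hTdef, intervalIntegral.integral_same]
  -- derivative of w ↦ F (w * t w) (t w) is zero
  have hφderiv : ∀ w : ℝ, 0 < w → HasDerivAt (fun w => F (w * t w) (t w)) 0 w := by
    intro w hw
    have hx0 : 0 < w * t w := mul_pos hw (htpos w)
    have hFd := hasFDerivAt_of_partials hF.partialX hF.partialY hF.contX hF.contY hx0 (htpos w)
    have hpath : HasDerivAt (fun w => ((w * t w, t w) : ℝ × ℝ))
        (1 * t w + w * (-g w * t w), -g w * t w) w :=
      ((hasDerivAt_id w).mul (htderiv w hw)).prodMk (htderiv w hw)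
    have hcomp := hFd.comp_hasDerivAt w hpath
    have hval : (Fx (w * t w) (t w) • ContinuousLinearMap.fst ℝ ℝ ℝ +
        Fy (w * t w) (t w) • ContinuousLinearMap.snd ℝ ℝ ℝ)
        ((1 * t w + w * (-g w * t w), -g w * t w) : ℝ × ℝ) = 0 := by
      have hratio := hF.ratio (w * t w) (t w) hx0 (htpos w)
      rw [mul_div_assoc, div_self (htpos w).ne', mul_one] at hratio
      have hFxval : Fx (w * t w) (t w) = G w * Fy (w * t w) (t w) := by
        have hFy := hF.posY (w * t w) (t w) hx0 (htpos w)
        field_simp at hratio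
        linarith [hratio]
      simp only [ContinuousLinearMap.add_apply, ContinuousLinearMap.coe_smul',
        Pi.smul_apply, ContinuousLinearMap.coe_fst', ContinuousLinearMap.coe_snd',
        smul_eq_mul]
      rw [hFxval, hgdef]
      have hd := (hden w hw).ne'
      have key : G w / (w * G w + 1) * (w * G w + 1) = G w := div_mul_cancel₀ _ hd
      beta_reduce
      linear_combination (-(Fy (w * t w) (t w)) * t w) * key
    rw [hval] at hcomp
    exact hcomp
  have hconst : ∀ w ∈ Icc β z, F (w * t w) (t w) = F β 1 := by
    intro w hw
    have h0 : ∀ x ∈ Icc β z, (0:ℝ) < x := fun x hx => lt_of_lt_of_le hβ hx.1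
    have h2 : F (w * t w) (t w) = F (β * t β) (t β) := constant_of_has_deriv_right_zero
      (f := fun w => F (w * t w) (t w)) (a := β) (b := z)
      (fun x hx => ((hφderiv x (h0 x hx)).continuousAt).continuousWithinAt)
      (fun x hx => ((hφderiv x (h0 x ⟨hx.1, hx.2.le⟩)).hasDerivWithinAt))
      w hw
    rw [htβ, mul_one] at h2
    exact h2
  -- bounds on t z
  have hIpos : 0 < T z :=
    intervalIntegral.intervalIntegral_pos_of_pos_on (hgint z hz0)
      (fun x hx => hgpos x (lt_trans hβ hx.1)) hβz
  have htz1 : t z < 1 := by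
    rw [htdef]
    simp only
    rw [← Real.exp_zero]
    exact Real.exp_lt_exp.2 (by linarith)
  have hIlt : T z < Real.log (z / β) := by
    rw [← integral_inv_of_pos hβ hz0]
    apply intervalIntegral.integral_lt_integral_of_continuousOn_of_le_of_exists_lt hβz
    · exact hgcont.mono (fun x hx => lt_of_lt_of_le hβ hx.1)
    · exact continuousOn_inv₀.mono (fun x hx => (lt_of_lt_of_le hβ hx.1).ne')
    · intro x hx
      have hx0 : (0:ℝ) < x := lt_trans hβ hx.1
      have := hGpos x hx0
      rw [hgdef]
      rw [div_le_iff₀ (hden x hx0), inv_mul_eq_div, le_div_iff₀ hx0]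
      nlinarith
    · refine ⟨z, ⟨hβz.le, le_refl z⟩, ?_⟩
      have := hGpos z hz0
      rw [hgdef]
      rw [div_lt_iff₀ (hden z hz0), inv_mul_eq_div, lt_div_iff₀ hz0]
      nlinarith
  have htzlb : β / z < t z := by
    have : Real.exp (-Real.log (z / β)) < t z := Real.exp_lt_exp.2 (by linarith)
    calc β / z = Real.exp (-Real.log (z / β)) := by
          rw [Real.exp_neg, Real.exp_log (by positivity), inv_div]
    _ < t z := this
  -- the witness
  refine ⟨(1 - z * t z / β, 1 - t z), ⟨?_, ⟨?_, ?_⟩, ?_, ?_⟩, ?_⟩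
  · simp only
    have : 1 < z * t z / β := by
      rw [lt_div_iff₀ hβ, one_mul]
      calc β = (β / z) * z := by field_simp
      _ < t z * z := by exact mul_lt_mul_of_pos_right htzlb hz0
      _ = z * t z := mul_comm _ _
    linarith
  · simp only; linarith
  · simp only; linarith [htpos z]
  · simp only
    rw [sub_sub_cancel, sub_sub_cancel]
    field_simp
    ring_nf; exact mul_inv_cancel₀ (htpos z).ne'
  · simp only
    rw [sub_sub_cancel, sub_sub_cancel]
    have : β * (z * t z / β) = z * t z := by field_simp
    rw [this]
    exact hconst z ⟨hβz.le, le_refl z⟩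
  · rintro ⟨eA, eB⟩ ⟨he1, ⟨he2a, he2b⟩, he3, he4⟩
    simp only at he1 he2a he2b he3 he4
    -- strict monotonicity along the ray of slope z
    have hmono : StrictMonoOn (fun s => F (z * s) s) (Ioi 0) := by
      have hder : ∀ s : ℝ, 0 < s → HasDerivAt (fun s => F (z * s) s)
          (Fx (z * s) s * z + Fy (z * s) s * 1) s := by
        intro s hs
        have hx0 : 0 < z * s := mul_pos hz0 hs
        have hFd := hasFDerivAt_of_partials hF.partialX hF.partialY hF.contX hF.contY hx0 hs
        have hpath : HasDerivAt (fun s => ((z * s, s) : ℝ × ℝ)) (z, 1) s := by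
          have := ((hasDerivAt_id s).const_mul z).prodMk (hasDerivAt_id s)
          simpa using this
        have hcomp : HasDerivAt (fun s => F (z * s) s)
            ((Fx (z * s) s • ContinuousLinearMap.fst ℝ ℝ ℝ +
              Fy (z * s) s • ContinuousLinearMap.snd ℝ ℝ ℝ) ((z, 1) : ℝ × ℝ)) s :=
          HasFDerivAt.comp_hasDerivAt (f := fun s => ((z * s, s) : ℝ × ℝ)) s hFd hpath
        simpa [ContinuousLinearMap.add_apply, smul_eq_mul, mul_comm] using hcomp
      apply strictMonoOn_of_deriv_pos (convex_Ioi 0)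
      · exact fun s hs => ((hder s hs).continuousAt).continuousWithinAt
      · intro s hs
        rw [interior_Ioi] at hs
        rw [(hder s hs).deriv]
        have := hF.posX (z * s) s (mul_pos hz0 hs) hs
        have := hF.posY (z * s) s (mul_pos hz0 hs) hs
        nlinarith
    have heB1 : (0:ℝ) < 1 - eB := by linarith
    have hratio : β * (1 - eA) = z * (1 - eB) := by
      rw [div_eq_iff heB1.ne'] at he3
      rw [he3]; field_simp; try ring
    have he4' : F (z * (1 - eB)) (1 - eB) = F β 1 := by rw [← hratio]; exact he4
    have hd4 : F (z * t z) (t z) = F β 1 := hconst z ⟨hβz.le, le_refl z⟩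
    have heq : 1 - eB = t z := by
      apply hmono.injOn (mem_Ioi.2 heB1) (mem_Ioi.2 (htpos z))
      show F (z * (1 - eB)) (1 - eB) = F (z * t z) (t z)
      rw [he4', hd4]
    have heqB : eB = 1 - t z := by linarith
    have heqA : eA = 1 - z * t z / β := by
      have : 1 - eA = z * t z / β := by
        rw [eq_div_iff hβ.ne']
        rw [mul_comm (1 - eA) β, hratio, heq]
      linarith
    simp only [Prod.mk.injEq]
    exact ⟨heqA, heqB⟩
end

section
/- Let F be a pricing function with marginal-rate function G and let f>0 be the unit trading fee. Suppose (α₁,β₁) and (α₂,β₂) satisfy G(β_i)/α_i < 1/(1+f) for i=1,2, with α₁ ≤ α₂ and β₁ ≤ β₂ and (α₁,β₁) ≠ (α₂,β₂). Then φ^A(α₁,β₁) < φ^A(α₂,β₂) and φ^B(α₁,β₁) > φ^B(α₂,β₂); that is, on the region {(α,β) : G(β)/α < 1/(1+f)}, φ^A is strictly increasing and φ^B is strictly decreasing in each of α and β. -/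
open Set Filter Topology

section Aux

variable {F Fx Fy : ℝ → ℝ → ℝ} {G G' : ℝ → ℝ}

lemma PF_monoX (hF : PricingFunction F Fx Fy G G') {y : ℝ} (hy : 0 < y) :
    StrictMonoOn (fun x => F x y) (Ioi (0:ℝ)) := by
  apply strictMonoOn_of_deriv_pos (convex_Ioi 0)
  · exact fun x hx => (hF.partialX x y hx hy).continuousAt.continuousWithinAt
  · intro x hx
    rw [interior_Ioi] at hx
    rw [(hF.partialX x y hx hy).deriv]
    exact hF.posX x y hx hy

lemma PF_monoY (hF : PricingFunction F Fx Fy G G') {x : ℝ} (hx : 0 < x) :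
    StrictMonoOn (fun y => F x y) (Ioi (0:ℝ)) := by
  apply strictMonoOn_of_deriv_pos (convex_Ioi 0)
  · exact fun y hy => (hF.partialY x y hx hy).continuousAt.continuousWithinAt
  · intro y hy
    rw [interior_Ioi] at hy
    rw [(hF.partialY x y hx hy).deriv]
    exact hF.posY x y hx hy

lemma PF_antiG (hF : PricingFunction F Fx Fy G G') :
    StrictAntiOn G (Ioi (0:ℝ)) := by
  apply strictAntiOn_of_deriv_neg (convex_Ioi 0)
  · exact fun z hz => (hF.derivG z hz).continuousAt.continuousWithinAt
  · intro z hz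
    rw [interior_Ioi] at hz
    rw [(hF.derivG z hz).deriv]
    exact hF.negG' z hz

lemma PF_Gpos (hF : PricingFunction F Fx Fy G G') {z : ℝ} (hz : 0 < z) :
    0 < G z := by
  have h1 : 0 ≤ G (z + 1) := by
    refine le_of_tendsto hF.tendstoGtop ?_
    refine eventually_atTop.2 ⟨z + 1, fun w hw => ?_⟩
    rcases eq_or_lt_of_le hw with h | h
    · exact le_of_eq (congrArg G h.symm)
    · exact le_of_lt ((PF_antiG hF) (mem_Ioi.mpr (by positivity)) (lt_trans (mem_Ioi.mpr (by positivity)) h) h)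
  have h2 : G (z + 1) < G z := (PF_antiG hF) hz (mem_Ioi.mpr (by positivity : (0:ℝ) < z + 1)) (by linarith)
  linarith

/-- On a level set, a smaller ratio means smaller x and larger y. -/
lemma PF_level_cmp (hF : PricingFunction F Fx Fy G G')
    {x₁ y₁ x₂ y₂ : ℝ} (hx₁ : 0 < x₁) (hy₁ : 0 < y₁) (hx₂ : 0 < x₂) (hy₂ : 0 < y₂)
    (heq : F x₁ y₁ = F x₂ y₂) (hr : x₂ / y₂ < x₁ / y₁) :
    x₂ < x₁ ∧ y₁ < y₂ := by
  have hcross : x₂ * y₁ < x₁ * y₂ := (div_lt_div_iff₀ hy₂ hy₁).mp hr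
  have hx : x₂ < x₁ := by
    by_contra h
    push_neg at h
    have hy : y₁ < y₂ := by nlinarith
    have h1 : F x₁ y₁ ≤ F x₂ y₁ :=
      ((PF_monoX hF) hy₁).monotoneOn hx₁ (lt_of_lt_of_le hx₁ h) h
    have h2 : F x₂ y₁ < F x₂ y₂ := (PF_monoY hF) hx₂ hy₁ (hy₁.trans hy) hy
    linarith [heq ▸ (lt_of_le_of_lt h1 h2)]
  refine ⟨hx, ?_⟩
  by_contra h
  push_neg at h
  have h1 : F x₂ y₂ ≤ F x₂ y₁ :=
    ((PF_monoY hF) hx₂).monotoneOn hy₂ (lt_of_lt_of_le hy₂ h) h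
  have h2 : F x₂ y₁ < F x₁ y₁ := (PF_monoX hF) hy₁ hx₂ (hx₂.trans hx) hx
  linarith [heq ▸ (lt_of_le_of_lt h1 h2)]

/-- Along a ray through the origin, F is strictly increasing. -/
lemma PF_ray_cmp (hF : PricingFunction F Fx Fy G G')
    {m y₁ y₂ : ℝ} (hm : 0 < m) (hy₁ : 0 < y₁) (hy₂ : 0 < y₂)
    (hlt : F (m * y₁) y₁ < F (m * y₂) y₂) : y₁ < y₂ := by
  by_contra h
  push_neg at h
  have hx : m * y₂ ≤ m * y₁ := by nlinarith
  have h1 : F (m * y₂) y₂ ≤ F (m * y₂) y₁ :=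
    ((PF_monoY hF) (by positivity : (0:ℝ) < m * y₂)).monotoneOn hy₂ (hy₂.trans_le h) h
  have h2 : F (m * y₂) y₁ ≤ F (m * y₁) y₁ :=
    ((PF_monoX hF) hy₁).monotoneOn (mem_Ioi.mpr (by positivity)) (mem_Ioi.mpr (by positivity)) hx
  linarith

end Aux
/-- Proposition 1(i), monotonicity on the region `G(β)/α < 1/(1+f)`: `φᴬ` is
strictly increasing and `φᴮ` is strictly decreasing in each of `α` and `β`. -/
theorem stmt2 (F Fx Fy : ℝ → ℝ → ℝ) (G G' Ginv : ℝ → ℝ)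
    (hF : PricingFunction F Fx Fy G G')
    (hGinv : ∀ u : ℝ, 0 < u → 0 < Ginv u ∧ G (Ginv u) = u)
    (f : ℝ) (hf : 0 < f)
    (φA φB : ℝ → ℝ → ℝ)
    (hφ : ∀ α β : ℝ, 0 < α → 0 < β → G β / α < 1 / (1 + f) →
      φA α β ∈ Ioo (0:ℝ) 1 ∧ φB α β < 0 ∧
      (1 - φA α β) / (1 - φB α β) = (1 / β) * Ginv (α / (1 + f)) ∧
      F (β * (1 - φA α β)) (1 - φB α β) = F β 1)
    (α₁ β₁ α₂ β₂ : ℝ) (hα₁ : 0 < α₁) (hβ₁ : 0 < β₁) (hα₂ : 0 < α₂) (hβ₂ : 0 < β₂)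
    (h₁ : G β₁ / α₁ < 1 / (1 + f)) (h₂ : G β₂ / α₂ < 1 / (1 + f))
    (hαle : α₁ ≤ α₂) (hβle : β₁ ≤ β₂) (hne : (α₁, β₁) ≠ (α₂, β₂)) :
    φA α₁ β₁ < φA α₂ β₂ ∧ φB α₂ β₂ < φB α₁ β₁ := by
  have hf1 : (0:ℝ) < 1 + f := by linarith
  -- the ratio of the point (β(1-φA), 1-φB) equals Ginv (α/(1+f))
  have hpt : ∀ α β : ℝ, 0 < α → 0 < β → G β / α < 1 / (1 + f) →
      β * (1 - φA α β) / (1 - φB α β) = Ginv (α / (1 + f)) := by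
    intro α β hα hβ hreg
    obtain ⟨hA, hB, hr, _⟩ := hφ α β hα hβ hreg
    rw [mul_div_assoc, hr]
    field_simp
  -- Ginv is strictly decreasing on positives
  have hGinvAnti : ∀ u v : ℝ, 0 < u → u < v → Ginv v < Ginv u := by
    intro u v hu huv
    by_contra h
    push_neg at h
    have hv : 0 < v := hu.trans huv
    have h1 := (PF_antiG hF).antitoneOn (mem_Ioi.mpr (hGinv u hu).1)
      (mem_Ioi.mpr (hGinv v hv).1) h
    rw [(hGinv u hu).2, (hGinv v hv).2] at h1
    linarith
  -- Step A : monotone in α at fixed β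
  have stepA : ∀ a a' b : ℝ, 0 < a → 0 < a' → 0 < b → a < a' →
      G b / a < 1 / (1 + f) → G b / a' < 1 / (1 + f) →
      φA a b < φA a' b ∧ φB a' b < φB a b := by
    intro a a' b ha ha' hb haa' hr1 hr2
    obtain ⟨hA₁, hB₁, -, hFeq₁⟩ := hφ a b ha hb hr1
    obtain ⟨hA₂, hB₂, -, hFeq₂⟩ := hφ a' b ha' hb hr2
    have hx₁ : 0 < b * (1 - φA a b) := by nlinarith [hA₁.1, hA₁.2]
    have hx₂ : 0 < b * (1 - φA a' b) := by nlinarith [hA₂.1, hA₂.2]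
    have hy₁ : 0 < 1 - φB a b := by linarith
    have hy₂ : 0 < 1 - φB a' b := by linarith
    have hru : a / (1 + f) < a' / (1 + f) := by gcongr
    have hm : Ginv (a' / (1 + f)) < Ginv (a / (1 + f)) :=
      hGinvAnti _ _ (by positivity) hru
    have e₁ := hpt a b ha hb hr1
    have e₂ := hpt a' b ha' hb hr2
    have hcmp := PF_level_cmp hF hx₁ hy₁ hx₂ hy₂ (hFeq₁.trans hFeq₂.symm)
      (by rw [e₁, e₂]; exact hm)
    constructor
    · have := hcmp.1
      have : 1 - φA a' b < 1 - φA a b := by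
        have := (mul_lt_mul_iff_right₀ hb).mp hcmp.1
        linarith
      linarith
    · linarith [hcmp.2]
  -- Step B : monotone in β at fixed α
  have stepB : ∀ a b b' : ℝ, 0 < a → 0 < b → 0 < b' → b < b' →
      G b / a < 1 / (1 + f) → G b' / a < 1 / (1 + f) →
      φA a b < φA a b' ∧ φB a b' < φB a b := by
    intro a b b' ha hb hb' hbb' hr1 hr2
    obtain ⟨hA₁, hB₁, -, hFeq₁⟩ := hφ a b ha hb hr1
    obtain ⟨hA₂, hB₂, -, hFeq₂⟩ := hφ a b' ha hb' hr2
    set m := Ginv (a / (1 + f)) with hmdef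
    have hmpos : 0 < m := (hGinv _ (by positivity)).1
    have hy₁ : 0 < 1 - φB a b := by linarith
    have hy₂ : 0 < 1 - φB a b' := by linarith
    have e₁ := hpt a b ha hb hr1
    have e₂ := hpt a b' ha hb' hr2
    have hx₁ : b * (1 - φA a b) = m * (1 - φB a b) := by
      rw [div_eq_iff hy₁.ne'] at e₁; exact e₁
    have hx₂ : b' * (1 - φA a b') = m * (1 - φB a b') := by
      rw [div_eq_iff hy₂.ne'] at e₂; exact e₂
    -- φB part: F (m y₁) y₁ = F b 1 < F b' 1 = F (m y₂) y₂
    have hFb : F b 1 < F b' 1 :=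
      PF_monoX hF one_pos (mem_Ioi.mpr hb) (mem_Ioi.mpr hb') hbb'
    have hyy : 1 - φB a b < 1 - φB a b' := by
      apply PF_ray_cmp hF hmpos hy₁ hy₂
      rw [← hx₁, ← hx₂, hFeq₁, hFeq₂]; exact hFb
    refine ⟨?_, by linarith⟩
    -- φA part via homogeneity with c = b'/b
    have hc : (1:ℝ) < b' / b := (one_lt_div hb).mpr hbb'
    have hcpos : (0:ℝ) < b' / b := by positivity
    have hhom := hF.homog _ _ _ _ (b'/b) (by nlinarith [hA₁.1, hA₁.2]) hy₁ hb one_pos hcpos hFeq₁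
    have hcb : b' / b * b = b' := by field_simp
    have hcb1 : b' / b * 1 = b' / b := mul_one _
    rw [hcb, hcb1] at hhom
    have hlt2 : F (b' * (1 - φA a b')) (1 - φB a b') < F (b' / b * (b * (1 - φA a b))) (b' / b * (1 - φB a b)) := by
      rw [hhom, hFeq₂]
      exact PF_monoY hF (mem_Ioi.mpr hb') (mem_Ioi.mpr one_pos) (mem_Ioi.mpr hcpos) hc
    have hray : 1 - φB a b' < b' / b * (1 - φB a b) := by
      apply PF_ray_cmp hF hmpos hy₂ (by positivity)
      have : b' / b * (b * (1 - φA a b)) = m * (b' / b * (1 - φB a b)) := by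
        rw [hx₁]; ring
      rw [← hx₂, ← this]; exact hlt2
    -- conclude: b' (1-φA a b') = m y₂ < m (b'/b) y₁ = (b'/b) * b (1-φA a b)
    have key : b' * (1 - φA a b') < b' * (1 - φA a b) := by
      rw [hx₂]
      calc m * (1 - φB a b') < m * (b' / b * (1 - φB a b)) := (mul_lt_mul_iff_right₀ hmpos).mpr hray
        _ = b' / b * (m * (1 - φB a b)) := by ring
        _ = b' / b * (b * (1 - φA a b)) := by rw [← hx₁]
        _ = b' * (1 - φA a b) := by field_simp
    have := (mul_lt_mul_iff_right₀ hb').mp key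
    linarith
  -- Combine
  rcases eq_or_lt_of_le hαle with hα | hα <;> rcases eq_or_lt_of_le hβle with hβ | hβ
  · exact absurd (by rw [hα, hβ]) hne
  · subst hα; exact stepB α₁ β₁ β₂ hα₁ hβ₁ hβ₂ hβ h₁ h₂
  · subst hβ; exact stepA α₁ α₂ β₁ hα₁ hα₂ hβ₁ hα h₁ h₂
  · have hmid : G β₁ / α₂ < 1 / (1 + f) := by
      have : G β₁ / α₂ ≤ G β₁ / α₁ := by
        gcongr
        exact (PF_Gpos hF hβ₁).le
      linarith
    have s1 := stepA α₁ α₂ β₁ hα₁ hα₂ hβ₁ hα h₁ hmid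
    have s2 := stepB α₂ β₁ β₂ hα₂ hβ₁ hβ₂ hβ hmid h₂
    exact ⟨s1.1.trans s2.1, s2.2.trans s1.2⟩
end

section
/- Let F be a pricing function with marginal-rate function G and let f>0 be the unit trading fee. Suppose (α₁,β₁) and (α₂,β₂) satisfy G(β_i)/α_i > 1+f for i=1,2, with α₁ ≤ α₂ and β₁ ≤ β₂ and (α₁,β₁) ≠ (α₂,β₂). Then φ^A(α₁,β₁) < φ^A(α₂,β₂) and φ^B(α₁,β₁) > φ^B(α₂,β₂); that is, on the region {(α,β) : G(β)/α > 1+f}, φ^A is strictly increasing and φ^B is strictly decreasing in each of α and β. -/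
open Set Filter Topology

set_option maxHeartbeats 2000000

/-- Proposition 1(i), monotonicity on the region `G(β)/α > 1+f`: `φᴬ` is
strictly increasing and `φᴮ` is strictly decreasing in each of `α` and `β`. -/
theorem stmt3 (F Fx Fy : ℝ → ℝ → ℝ) (G G' Ginv : ℝ → ℝ)
    (hF : PricingFunction F Fx Fy G G')
    (hGinv : ∀ u : ℝ, 0 < u → 0 < Ginv u ∧ G (Ginv u) = u)
    (f : ℝ) (hf : 0 < f)
    (φA φB : ℝ → ℝ → ℝ)
    (hφ : ∀ α β : ℝ, 0 < α → 0 < β → 1 + f < G β / α →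
      φA α β < 0 ∧ φB α β ∈ Ioo (0:ℝ) 1 ∧
      (1 - φA α β) / (1 - φB α β) = (1 / β) * Ginv (α * (1 + f)) ∧
      F (β * (1 - φA α β)) (1 - φB α β) = F β 1)
    (α₁ β₁ α₂ β₂ : ℝ) (hα₁ : 0 < α₁) (hβ₁ : 0 < β₁) (hα₂ : 0 < α₂) (hβ₂ : 0 < β₂)
    (h₁ : 1 + f < G β₁ / α₁) (h₂ : 1 + f < G β₂ / α₂)
    (hαle : α₁ ≤ α₂) (hβle : β₁ ≤ β₂) (hne : (α₁, β₁) ≠ (α₂, β₂)) :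
    φA α₁ β₁ < φA α₂ β₂ ∧ φB α₂ β₂ < φB α₁ β₁ := by
  -- Strict monotonicity of F in each argument
  have hMx : ∀ y : ℝ, 0 < y → StrictMonoOn (fun x => F x y) (Ioi 0) := by
    intro y hy
    apply strictMonoOn_of_deriv_pos (convex_Ioi 0)
    · intro x hx
      exact ((hF.partialX x y hx hy).continuousAt).continuousWithinAt
    · intro x hx
      rw [interior_Ioi] at hx
      rw [(hF.partialX x y hx hy).deriv]
      exact hF.posX x y hx hy
  have hMy : ∀ x : ℝ, 0 < x → StrictMonoOn (fun y => F x y) (Ioi 0) := by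
    intro x hx
    apply strictMonoOn_of_deriv_pos (convex_Ioi 0)
    · intro y hy
      exact ((hF.partialY x y hx hy).continuousAt).continuousWithinAt
    · intro y hy
      rw [interior_Ioi] at hy
      rw [(hF.partialY x y hx hy).deriv]
      exact hF.posY x y hx hy
  have Fle : ∀ {x y x' y' : ℝ}, 0 < x → 0 < y → x ≤ x' → y ≤ y' → F x y ≤ F x' y' := by
    intro x y x' y' hx hy hxx hyy
    have hx' : 0 < x' := lt_of_lt_of_le hx hxx
    have hy' : 0 < y' := lt_of_lt_of_le hy hyy
    calc F x y ≤ F x' y := (hMx y hy).monotoneOn (mem_Ioi.mpr hx) (mem_Ioi.mpr hx') hxx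
      _ ≤ F x' y' := (hMy x' hx').monotoneOn (mem_Ioi.mpr hy) (mem_Ioi.mpr hy') hyy
  have Flt : ∀ {x y x' y' : ℝ}, 0 < x → 0 < y → x ≤ x' → y ≤ y' → (x < x' ∨ y < y') →
      F x y < F x' y' := by
    intro x y x' y' hx hy hxx hyy hor
    have hx' : 0 < x' := lt_of_lt_of_le hx hxx
    have hy' : 0 < y' := lt_of_lt_of_le hy hyy
    rcases hor with h | h
    · calc F x y < F x' y := (hMx y hy) (mem_Ioi.mpr hx) (mem_Ioi.mpr hx') h
        _ ≤ F x' y' := (hMy x' hx').monotoneOn (mem_Ioi.mpr hy) (mem_Ioi.mpr hy') hyy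
    · calc F x y ≤ F x' y := (hMx y hy).monotoneOn (mem_Ioi.mpr hx) (mem_Ioi.mpr hx') hxx
        _ < F x' y' := (hMy x' hx') (mem_Ioi.mpr hy) (mem_Ioi.mpr hy') h
  -- G is strictly decreasing on (0, ∞)
  have hGanti : StrictAntiOn G (Ioi 0) := by
    apply strictAntiOn_of_deriv_neg (convex_Ioi 0)
    · intro z hz
      exact ((hF.derivG z hz).continuousAt).continuousWithinAt
    · intro z hz
      rw [interior_Ioi] at hz
      rw [(hF.derivG z hz).deriv]
      exact hF.negG' z hz
  -- extraction of the basic data at a point of the region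
  have ext : ∀ α β : ℝ, 0 < α → 0 < β → 1 + f < G β / α →
      β * (1 - φA α β) = Ginv (α * (1 + f)) * (1 - φB α β) ∧
      0 < 1 - φB α β ∧ 1 < 1 - φA α β ∧
      F (β * (1 - φA α β)) (1 - φB α β) = F β 1 := by
    intro α β hα hβ hreg
    obtain ⟨hA, hB, hrat, hlvl⟩ := hφ α β hα hβ hreg
    have hb : 0 < 1 - φB α β := by linarith [hB.2]
    have ha : 1 < 1 - φA α β := by linarith
    refine ⟨?_, hb, ha, hlvl⟩
    have hβne : (β : ℝ) ≠ 0 := ne_of_gt hβ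
    have hbne : (1 - φB α β) ≠ 0 := ne_of_gt hb
    field_simp at hrat
    nlinarith [hrat]
  -- positivity and value of Ginv at α(1+f)
  have hr : ∀ α : ℝ, 0 < α → 0 < Ginv (α * (1 + f)) ∧ G (Ginv (α * (1 + f))) = α * (1 + f) := by
    intro α hα
    exact hGinv (α * (1 + f)) (by positivity)
  -- Step in α (β fixed)
  have stepα : ∀ α α' β : ℝ, 0 < α → 0 < α' → 0 < β → α < α' →
      1 + f < G β / α → 1 + f < G β / α' →
      φA α β < φA α' β ∧ φB α' β < φB α β := by
    intro α α' β hα hα' hβ hlt hreg hreg'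
    obtain ⟨ha1, hb1, hA1, hl1⟩ := ext α β hα hβ hreg
    obtain ⟨ha2, hb2, hA2, hl2⟩ := ext α' β hα' hβ hreg'
    set r₁ := Ginv (α * (1 + f)) with hr₁def
    set r₂ := Ginv (α' * (1 + f)) with hr₂def
    obtain ⟨hr₁pos, hGr₁⟩ := hr α hα
    obtain ⟨hr₂pos, hGr₂⟩ := hr α' hα'
    set a₁ := β * (1 - φA α β) with ha₁def
    set b₁ := (1 - φB α β) with hb₁def
    set a₂ := β * (1 - φA α' β) with ha₂def
    set b₂ := (1 - φB α' β) with hb₂def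
    have ha₁pos : 0 < a₁ := by positivity
    have ha₂pos : 0 < a₂ := by positivity
    -- r₂ < r₁
    have hGlt : G r₁ < G r₂ := by
      rw [hGr₁, hGr₂]; nlinarith
    have hrlt : r₂ < r₁ := by
      by_contra hcon
      push_neg at hcon
      rcases eq_or_lt_of_le hcon with he | hl
      · rw [he] at hGlt; exact lt_irrefl _ hGlt
      · exact absurd (hGanti (mem_Ioi.mpr hr₁pos) (mem_Ioi.mpr hr₂pos) hl) (by linarith)
    have hlvl : F a₁ b₁ = F a₂ b₂ := by rw [hl1, hl2]
    -- b₁ < b₂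
    have hblt : b₁ < b₂ := by
      by_contra hcon
      push_neg at hcon
      have halt : a₂ < a₁ := by
        rw [ha1, ha2]; nlinarith
      have := Flt ha₂pos hb2 (le_of_lt halt) hcon (Or.inl halt)
      rw [hlvl] at this; exact lt_irrefl _ this
    -- a₂ < a₁
    have halt : a₂ < a₁ := by
      by_contra hcon
      push_neg at hcon
      have := Flt ha₁pos hb1 hcon (le_of_lt hblt) (Or.inr hblt)
      rw [hlvl] at this; exact lt_irrefl _ this
    constructor
    · rw [ha₂def, ha₁def] at halt
      have h5 : 1 - φA α' β < 1 - φA α β := (mul_lt_mul_iff_right₀ hβ).mp halt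
      linarith
    · linarith
  -- Step in β (α fixed)
  have stepβ : ∀ α β β' : ℝ, 0 < α → 0 < β → 0 < β' → β < β' →
      1 + f < G β / α → 1 + f < G β' / α →
      φA α β < φA α β' ∧ φB α β' < φB α β := by
    intro α β β' hα hβ hβ' hlt hreg hreg'
    obtain ⟨ha1, hb1, hA1, hl1⟩ := ext α β hα hβ hreg
    obtain ⟨ha2, hb2, hA2, hl2⟩ := ext α β' hα hβ' hreg'
    set r := Ginv (α * (1 + f)) with hrdef
    obtain ⟨hrpos, hGr⟩ := hr α hα
    set a₁ := β * (1 - φA α β) with ha₁def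
    set b₁ := (1 - φB α β) with hb₁def
    set a₂ := β' * (1 - φA α β') with ha₂def
    set b₂ := (1 - φB α β') with hb₂def
    have ha₁pos : 0 < a₁ := by positivity
    have ha₂pos : 0 < a₂ := by positivity
    have hFβ : F β 1 < F β' 1 := Flt hβ one_pos (le_of_lt hlt) le_rfl (Or.inl hlt)
    -- b₁ < b₂
    have hblt : b₁ < b₂ := by
      by_contra hcon
      push_neg at hcon
      have hale : a₂ ≤ a₁ := by rw [ha1, ha2]; nlinarith
      have h1 : F a₂ b₂ ≤ F a₁ b₁ := Fle ha₂pos hb2 hale hcon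
      rw [hl1, hl2] at h1
      exact absurd hFβ (not_lt.mpr h1)
    -- a₂ * β < a₁ * β'
    have hkey : a₂ * β < a₁ * β' := by
      by_contra hcon
      push_neg at hcon
      set c := β' / β with hcdef
      have hc1 : 1 < c := (one_lt_div hβ).mpr hlt
      have hcpos : 0 < c := by linarith
      have hhom : F (c * a₁) (c * b₁) = F (c * β) (c * 1) :=
        hF.homog a₁ b₁ β 1 c ha₁pos hb1 hβ one_pos hcpos hl1
      have hcβ : c * β = β' := by rw [hcdef]; field_simp
      have hca : c * a₁ ≤ a₂ := by
        rw [hcdef]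
        rw [div_mul_eq_mul_div, div_le_iff₀ hβ]
        nlinarith
      have hcb : c * b₁ ≤ b₂ := by
        have : a₁ = r * b₁ := ha1
        have h2 : a₂ = r * b₂ := ha2
        nlinarith
      have h3 : F (c * a₁) (c * b₁) ≤ F a₂ b₂ :=
        Fle (by positivity) (by positivity) hca hcb
      rw [hhom, hcβ, mul_one, hl2] at h3
      have h4 : F β' 1 < F β' c := Flt hβ' one_pos le_rfl (le_of_lt hc1) (Or.inr hc1)
      linarith
    constructor
    · rw [ha₁def, ha₂def] at hkey
      have hββ' : 0 < β * β' := by positivity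
      nlinarith [hkey, hββ']
    · linarith
  -- Combine
  rcases eq_or_lt_of_le hαle with hαeq | hαlt
  · rcases eq_or_lt_of_le hβle with hβeq | hβlt
    · exact absurd (by rw [hαeq, hβeq]) hne
    · subst hαeq
      exact stepβ α₁ β₁ β₂ hα₁ hβ₁ hβ₂ hβlt h₁ h₂
  · rcases eq_or_lt_of_le hβle with hβeq | hβlt
    · subst hβeq
      exact stepα α₁ α₂ β₁ hα₁ hα₂ hβ₁ hαlt h₁ h₂
    · -- go through the intermediate point (α₁, β₂)
      have hGβ₂pos : 0 < G β₂ := by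
        have : 0 < (1 + f) * α₂ := by positivity
        have := (lt_div_iff₀ hα₂).mp h₂
        linarith
      have hmid : 1 + f < G β₂ / α₁ := by
        have : G β₂ / α₂ ≤ G β₂ / α₁ :=
          div_le_div_of_nonneg_left (le_of_lt hGβ₂pos) hα₁ hαle
        linarith
      obtain ⟨hA1, hB1⟩ := stepβ α₁ β₁ β₂ hα₁ hβ₁ hβ₂ hβlt h₁ hmid
      obtain ⟨hA2, hB2⟩ := stepα α₁ α₂ β₂ hα₁ hα₂ hβ₂ hαlt hmid h₂
      exact ⟨lt_trans hA1 hA2, lt_trans hB2 hB1⟩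
end

section
/- Let F be a pricing function with marginal-rate function G, let f>0 be the unit trading fee, and let a,b,y^A,y^B > 0 with G(y^A/y^B)/(a/b) < 1/(1+f). Then the investor's problem admits a unique optimal solution (D̂^A, D̂^B), given by D̂^A = φ^A(a/b, y^A/y^B)·y^A and D̂^B = φ^B(a/b, y^A/y^B)·y^B; in particular D̂^A > 0, D̂^B < 0, and the optimal objective value is strictly positive. -/
open Set Filter Topology

/-- The investor's post-fee profit `a(1+f·1_{Dᴬ<0})Dᴬ + b(1+f·1_{Dᴮ<0})Dᴮ`. -/
noncomputable def objective (f a b DA DB : ℝ) : ℝ :=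
  a * (if DA < 0 then 1 + f else 1) * DA + b * (if DB < 0 then 1 + f else 1) * DB

lemma hasDerivAt_line (F Fx Fy : ℝ → ℝ → ℝ) {G G' : ℝ → ℝ}
    (hF : PricingFunction F Fx Fy G G') (u v : ℝ) {t₀ : ℝ} (ht₀ : 0 < t₀)
    (hl₀ : 0 < u + v * t₀) :
    HasDerivAt (fun t => F t (u + v * t))
      (Fx t₀ (u + v * t₀) + v * Fy t₀ (u + v * t₀)) t₀ := by
  have hline : HasDerivAt (fun t : ℝ => u + v * t) v t₀ := by
    simpa using ((hasDerivAt_id t₀).const_mul v).const_add u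
  have h2 : HasDerivAt (fun t => F t₀ (u + v * t)) (v * Fy t₀ (u + v * t₀)) t₀ := by
    have := (hF.partialY t₀ (u + v * t₀) ht₀ hl₀).comp t₀ hline
    rw [mul_comm] at this; exact this
  have h1 : HasDerivAt (fun t => F t (u + v * t) - F t₀ (u + v * t))
      (Fx t₀ (u + v * t₀)) t₀ := by
    rw [hasDerivAt_iff_isLittleO]
    rw [Asymptotics.isLittleO_iff]
    intro ε hε
    have hc : ContinuousAt (fun p : ℝ × ℝ => Fx p.1 p.2) (t₀, u + v * t₀) :=
      hF.contX.continuousAt (IsOpen.mem_nhds (isOpen_Ioi.prod isOpen_Ioi) ⟨ht₀, hl₀⟩)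
    rw [Metric.continuousAt_iff] at hc
    obtain ⟨δ, hδpos, hδ⟩ := hc ε hε
    set L₀ := u + v * t₀ with hL₀
    set r := min (δ / (1 + |v|)) (min t₀ L₀ / (2 * (1 + |v|))) with hr
    have hvpos : (0:ℝ) < 1 + |v| := by positivity
    have hrpos : 0 < r := by
      apply lt_min
      · positivity
      · have : 0 < min t₀ L₀ := lt_min ht₀ hl₀
        positivity
    rw [Metric.eventually_nhds_iff]
    refine ⟨r, hrpos, fun t ht => ?_⟩
    rw [Real.dist_eq] at ht
    -- basic bounds
    have hb1 : |t - t₀| * (1 + |v|) < δ := by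
      have h1 : |t - t₀| < δ / (1 + |v|) := lt_of_lt_of_le ht (min_le_left _ _)
      calc |t - t₀| * (1 + |v|) < δ / (1 + |v|) * (1 + |v|) := by
            exact mul_lt_mul_of_pos_right h1 hvpos
        _ = δ := by field_simp
    have hb2 : |t - t₀| * (1 + |v|) < min t₀ L₀ / 2 := by
      have h1 : |t - t₀| < min t₀ L₀ / (2 * (1 + |v|)) := lt_of_lt_of_le ht (min_le_right _ _)
      calc |t - t₀| * (1 + |v|) < min t₀ L₀ / (2 * (1 + |v|)) * (1 + |v|) := by
            exact mul_lt_mul_of_pos_right h1 hvpos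
        _ = min t₀ L₀ / 2 := by field_simp
    have htδ : |t - t₀| < δ := by nlinarith [abs_nonneg (t - t₀), abs_nonneg v]
    have hLδ : |(u + v * t) - L₀| < δ := by
      have : (u + v * t) - L₀ = v * (t - t₀) := by rw [hL₀]; ring
      rw [this, abs_mul]
      nlinarith [abs_nonneg (t - t₀), abs_nonneg v]
    have htmin : |t - t₀| < min t₀ L₀ / 2 := by
      nlinarith [abs_nonneg (t - t₀), abs_nonneg v]
    have hLt : 0 < u + v * t := by
      have h1 : |(u + v * t) - L₀| ≤ min t₀ L₀ / 2 := by
        have : (u + v * t) - L₀ = v * (t - t₀) := by rw [hL₀]; ring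
        rw [this, abs_mul]
        nlinarith [abs_nonneg (t - t₀), abs_nonneg v]
      have h2 : min t₀ L₀ ≤ L₀ := min_le_right _ _
      have := abs_le.1 h1
      have hm : 0 < min t₀ L₀ := lt_min ht₀ hl₀
      linarith [this.1]
    -- positivity of points between t and t₀
    have hspos : ∀ s : ℝ, min t t₀ ≤ s → 0 < s := by
      intro s hs
      have h1 := abs_le.1 htmin.le
      have hm : 0 < min t₀ L₀ := lt_min ht₀ hl₀
      have hmt : min t₀ L₀ ≤ t₀ := min_le_left _ _
      rcases le_total t t₀ with h | h
      · have : min t t₀ = t := min_eq_left h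
        rw [this] at hs
        have : t₀ - t ≤ min t₀ L₀ / 2 := by
          have := abs_le.1 htmin.le; rw [abs_sub_comm] at htmin
          have := abs_le.1 htmin.le; linarith [this.2]
        linarith
      · have : min t t₀ = t₀ := min_eq_right h
        rw [this] at hs; linarith
    rcases eq_or_ne t t₀ with rfl | hne
    · simp
    -- mean value theorem
    have key : ∃ ξ : ℝ, |ξ - t₀| < δ ∧
        F t (u + v * t) - F t₀ (u + v * t) = Fx ξ (u + v * t) * (t - t₀) := by
      rcases hne.lt_or_gt with hlt | hlt
      · -- t < t₀
        obtain ⟨ξ, hξ, hξeq⟩ := exists_hasDerivAt_eq_slope (fun s => F s (u + v * t))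
          (fun s => Fx s (u + v * t)) hlt
          (fun s hs => ((hF.partialX s (u + v * t)
            (hspos s (le_trans (min_le_left _ _) hs.1)) hLt).continuousAt).continuousWithinAt)
          (fun s hs => hF.partialX s (u + v * t)
            (hspos s (le_trans (min_le_left _ _) hs.1.le)) hLt)
        refine ⟨ξ, ?_, ?_⟩
        · have h2 : t₀ - t ≤ |t - t₀| := by rw [abs_sub_comm]; exact le_abs_self _
          rw [abs_of_neg (by linarith [hξ.2] : ξ - t₀ < 0)]
          linarith [hξ.1]
        · rw [eq_div_iff (sub_ne_zero.2 (by linarith : t₀ ≠ t))] at hξeq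
          linear_combination hξeq
      · -- t₀ < t
        obtain ⟨ξ, hξ, hξeq⟩ := exists_hasDerivAt_eq_slope (fun s => F s (u + v * t))
          (fun s => Fx s (u + v * t)) hlt
          (fun s hs => ((hF.partialX s (u + v * t)
            (hspos s (le_trans (min_le_right _ _) hs.1)) hLt).continuousAt).continuousWithinAt)
          (fun s hs => hF.partialX s (u + v * t)
            (hspos s (le_trans (min_le_right _ _) hs.1.le)) hLt)
        refine ⟨ξ, ?_, ?_⟩
        · have h2 : t - t₀ ≤ |t - t₀| := le_abs_self _
          rw [abs_of_pos (by linarith [hξ.1] : 0 < ξ - t₀)]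
          linarith [hξ.2]
        · rw [eq_div_iff (sub_ne_zero.2 (by linarith : t ≠ t₀))] at hξeq
          linear_combination -hξeq
    obtain ⟨ξ, hξδ, hξeq⟩ := key
    have hd : dist ((ξ, u + v * t) : ℝ × ℝ) (t₀, L₀) < δ := by
      rw [Prod.dist_eq]
      exact max_lt (by rwa [Real.dist_eq]) (by rwa [Real.dist_eq])
    have hFxclose := hδ hd
    rw [Real.dist_eq] at hFxclose
    have : F t (u + v * t) - F t₀ (u + v * t) -
        (F t₀ (u + v * t₀) - F t₀ (u + v * t₀)) - (t - t₀) • Fx t₀ (u + v * t₀)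
        = (Fx ξ (u + v * t) - Fx t₀ L₀) * (t - t₀) := by
      rw [smul_eq_mul, hL₀]
      rw [sub_self, sub_zero, hξeq]; ring
    rw [Real.norm_eq_abs, Real.norm_eq_abs, this, abs_mul]
    exact mul_le_mul_of_nonneg_right hFxclose.le (abs_nonneg _)
  have := h1.add h2
  exact this.congr_of_eventuallyEq (Filter.Eventually.of_forall fun t => by simp)

lemma strictMonoY (F Fx Fy : ℝ → ℝ → ℝ) {G G' : ℝ → ℝ}
    (hF : PricingFunction F Fx Fy G G') {x : ℝ} (hx : 0 < x) :
    StrictMonoOn (fun y => F x y) (Ioi 0) := by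
  apply strictMonoOn_of_deriv_pos (convex_Ioi 0)
  · exact fun y hy => ((hF.partialY x y hx hy).continuousAt).continuousWithinAt
  · intro y hy
    rw [interior_Ioi] at hy
    rw [(hF.partialY x y hx hy).deriv]
    exact hF.posY x y hx hy

lemma strictAntiG (F Fx Fy : ℝ → ℝ → ℝ) {G G' : ℝ → ℝ}
    (hF : PricingFunction F Fx Fy G G') :
    StrictAntiOn G (Ioi 0) := by
  apply strictAntiOn_of_deriv_neg (convex_Ioi 0)
  · exact fun z hz => ((hF.derivG z hz).continuousAt).continuousWithinAt
  · intro z hz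
    rw [interior_Ioi] at hz
    rw [(hF.derivG z hz).deriv]
    exact hF.negG' z hz

lemma key_min (F Fx Fy : ℝ → ℝ → ℝ) {G G' : ℝ → ℝ}
    (hF : PricingFunction F Fx Fy G G') {k xh yh x y : ℝ} (hk : 0 < k)
    (hxh : 0 < xh) (hyh : 0 < yh) (hGk : G (xh / yh) = k)
    (hx : 0 < x) (hy : 0 < y) (hFeq : F x y = F xh yh)
    (hne : x ≠ xh ∨ y ≠ yh) :
    k * xh + yh < k * x + y := by
  by_contra hcon
  push_neg at hcon
  set u : ℝ := yh + k * xh with hu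
  set v : ℝ := -k with hv
  have hlxh : u + v * xh = yh := by rw [hu, hv]; ring
  have hyle : y ≤ u + v * x := by rw [hu, hv]; linarith
  -- derivative sign helper
  have hderiv : ∀ t : ℝ, 0 < t → 0 < u + v * t →
      deriv (fun s => F s (u + v * s)) t
        = Fy t (u + v * t) * (G (t / (u + v * t)) - k) := by
    intro t htp hlp
    rw [(hasDerivAt_line F Fx Fy hF u v htp hlp).deriv]
    have hFy := hF.posY t (u + v * t) htp hlp
    have hr := hF.ratio t (u + v * t) htp hlp
    rw [div_eq_iff hFy.ne'] at hr
    rw [hr, hv]; ring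
  have hcont : ∀ t : ℝ, 0 < t → 0 < u + v * t →
      ContinuousAt (fun s => F s (u + v * s)) t := by
    intro t htp hlp
    exact (hasDerivAt_line F Fx Fy hF u v htp hlp).continuousAt
  rcases lt_trichotomy x xh with hlt | heq | hlt
  · -- x < xh : h strictly increasing on [x, xh]
    have hpos : ∀ t ∈ Icc x xh, 0 < t ∧ 0 < u + v * t := by
      intro t ht
      refine ⟨lt_of_lt_of_le hx ht.1, ?_⟩
      have : u + v * t ≥ u + v * xh := by
        rw [hv]; nlinarith [ht.2]
      rw [hlxh] at this; linarith
    have hmono : StrictMonoOn (fun s => F s (u + v * s)) (Icc x xh) := by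
      apply strictMonoOn_of_deriv_pos (convex_Icc x xh)
      · exact fun t ht => ((hcont t (hpos t ht).1 (hpos t ht).2).continuousWithinAt)
      · intro t ht
        rw [interior_Icc] at ht
        have h1 := (hpos t ⟨ht.1.le, ht.2.le⟩).1
        have h2 := (hpos t ⟨ht.1.le, ht.2.le⟩).2
        rw [hderiv t h1 h2]
        have hFy := hF.posY t (u + v * t) h1 h2
        have hGgt : k < G (t / (u + v * t)) := by
          rw [← hGk]
          apply strictAntiG F Fx Fy hF (div_pos h1 h2)
            (mem_Ioi.2 (div_pos hxh hyh)) ?_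
          rw [div_lt_div_iff₀ h2 hyh]
          have hl : u + v * t = yh + k * (xh - t) := by rw [hu, hv]; ring
          rw [hl]
          nlinarith [mul_pos (mul_pos hk hxh) (sub_pos.2 ht.2),
            mul_lt_mul_of_pos_right ht.2 hyh]
        nlinarith
    have h1 : F x (u + v * x) < F xh (u + v * xh) :=
      hmono (left_mem_Icc.2 hlt.le) (right_mem_Icc.2 hlt.le) hlt
    rw [hlxh] at h1
    have h2 : F x y ≤ F x (u + v * x) := by
      rcases eq_or_lt_of_le hyle with heq2 | hlt2
      · rw [heq2]
      · exact (strictMonoY F Fx Fy hF hx (mem_Ioi.2 hy)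
          (mem_Ioi.2 ((hpos x (left_mem_Icc.2 hlt.le)).2)) hlt2).le
    rw [hFeq] at h2
    linarith
  · -- x = xh : then y < yh
    subst heq
    have hyne : y ≠ yh := by
      rcases hne with h | h
      · exact absurd rfl h
      · exact h
    have hylt : y < yh := by
      have : y ≤ yh := by
        have := hcon; nlinarith
      exact lt_of_le_of_ne this hyne
    have h2 : F x y < F x yh :=
      strictMonoY F Fx Fy hF hx (mem_Ioi.2 hy) (mem_Ioi.2 hyh) hylt
    rw [hFeq] at h2
    exact lt_irrefl _ h2
  · -- xh < x : h strictly decreasing on [xh, x]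
    have hlxpos : 0 < u + v * x := lt_of_lt_of_le hy hyle
    have hpos : ∀ t ∈ Icc xh x, 0 < t ∧ 0 < u + v * t := by
      intro t ht
      refine ⟨lt_of_lt_of_le hxh ht.1, ?_⟩
      have : u + v * t ≥ u + v * x := by
        rw [hv]; nlinarith [ht.2]
      linarith
    have hanti : StrictAntiOn (fun s => F s (u + v * s)) (Icc xh x) := by
      apply strictAntiOn_of_deriv_neg (convex_Icc xh x)
      · exact fun t ht => ((hcont t (hpos t ht).1 (hpos t ht).2).continuousWithinAt)
      · intro t ht
        rw [interior_Icc] at ht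
        have h1 := (hpos t ⟨ht.1.le, ht.2.le⟩).1
        have h2 := (hpos t ⟨ht.1.le, ht.2.le⟩).2
        rw [hderiv t h1 h2]
        have hFy := hF.posY t (u + v * t) h1 h2
        have hGlt : G (t / (u + v * t)) < k := by
          rw [← hGk]
          apply strictAntiG F Fx Fy hF (mem_Ioi.2 (div_pos hxh hyh))
            (div_pos h1 h2) ?_
          rw [div_lt_div_iff₀ hyh h2]
          have hl : u + v * t = yh - k * (t - xh) := by rw [hu, hv]; ring
          rw [hl]
          nlinarith [mul_pos (mul_pos hk hxh) (sub_pos.2 ht.1),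
            mul_lt_mul_of_pos_right ht.1 hyh]
        nlinarith
    have h1 : F x (u + v * x) < F xh (u + v * xh) :=
      hanti (left_mem_Icc.2 hlt.le) (right_mem_Icc.2 hlt.le) hlt
    rw [hlxh] at h1
    have h2 : F x y ≤ F x (u + v * x) := by
      rcases eq_or_lt_of_le hyle with heq2 | hlt2
      · rw [heq2]
      · exact (strictMonoY F Fx Fy hF hx (mem_Ioi.2 hy)
          (mem_Ioi.2 hlxpos) hlt2).le
    rw [hFeq] at h2
    linarith

lemma obj_le (f a b DA DB : ℝ) (hf : 0 < f) (ha : 0 < a) (hb : 0 < b) :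
    objective f a b DA DB ≤ a * DA + b * (1 + f) * DB := by
  rw [objective]
  split_ifs with h1 h2 h2
  · nlinarith [mul_neg_of_pos_of_neg (mul_pos ha hf) h1]
  · nlinarith [mul_neg_of_pos_of_neg (mul_pos ha hf) h1,
      mul_nonneg (mul_pos hb hf).le (not_lt.1 h2)]
  · nlinarith
  · nlinarith [mul_nonneg (mul_pos hb hf).le (not_lt.1 h2)]

lemma lin_helper (a c x y xh yh yA yB : ℝ)
    (h : a * xh + c * yh < a * x + c * y) :
    a * (yA - x) + c * (yB - y) < a * (yA - xh) + c * (yB - yh) := by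
  nlinarith [h]


/-- Proposition 1(ii), first case: if `G(yᴬ/yᴮ)/(a/b) < 1/(1+f)`, the investor's
problem admits the unique optimal solution `D̂ⁱ = φⁱ(a/b, yᴬ/yᴮ)·yⁱ`, which is
feasible, has `D̂ᴬ > 0 > D̂ᴮ`, and strictly positive objective value. -/
theorem stmt6 (F Fx Fy : ℝ → ℝ → ℝ) (G G' Ginv : ℝ → ℝ)
    (hF : PricingFunction F Fx Fy G G')
    (hGinv : ∀ u : ℝ, 0 < u → 0 < Ginv u ∧ G (Ginv u) = u)
    (f : ℝ) (hf : 0 < f)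
    (φA φB : ℝ → ℝ → ℝ)
    (hφ : ∀ α β : ℝ, 0 < α → 0 < β → G β / α < 1 / (1 + f) →
      φA α β ∈ Ioo (0:ℝ) 1 ∧ φB α β < 0 ∧
      (1 - φA α β) / (1 - φB α β) = (1 / β) * Ginv (α / (1 + f)) ∧
      F (β * (1 - φA α β)) (1 - φB α β) = F β 1)
    (a b yA yB : ℝ) (ha : 0 < a) (hb : 0 < b) (hyA : 0 < yA) (hyB : 0 < yB)
    (hreg : G (yA / yB) / (a / b) < 1 / (1 + f)) :
    let DhatA := φA (a / b) (yA / yB) * yA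
    let DhatB := φB (a / b) (yA / yB) * yB
    (F (yA - DhatA) (yB - DhatB) = F yA yB ∧ 0 < yA - DhatA ∧ 0 < yB - DhatB) ∧
    0 < DhatA ∧ DhatB < 0 ∧ 0 < objective f a b DhatA DhatB ∧
    ∀ DA DB : ℝ, F (yA - DA) (yB - DB) = F yA yB →
      0 < yA - DA → 0 < yB - DB → (DA, DB) ≠ (DhatA, DhatB) →
      objective f a b DA DB < objective f a b DhatA DhatB := by
  intro DhatA DhatB
  have hDA : DhatA = φA (a / b) (yA / yB) * yA := rfl
  have hDB : DhatB = φB (a / b) (yA / yB) * yB := rfl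
  have hα : 0 < a / b := div_pos ha hb
  have hβ : 0 < yA / yB := div_pos hyA hyB
  have h1f : 0 < 1 + f := by linarith
  obtain ⟨hpA, hpB, hrat, hFeq0⟩ := hφ (a / b) (yA / yB) hα hβ hreg
  set pA := φA (a / b) (yA / yB) with hpAdef
  set pB := φB (a / b) (yA / yB) with hpBdef
  have hpA0 : 0 < pA := hpA.1
  have hpA1 : pA < 1 := hpA.2
  have h1A : 0 < 1 - pA := by linarith
  have h1B : 0 < 1 - pB := by linarith
  set xh : ℝ := yA * (1 - pA) with hxhdef
  set yh : ℝ := yB * (1 - pB) with hyhdef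
  have hxh : 0 < xh := mul_pos hyA h1A
  have hyh : 0 < yh := mul_pos hyB h1B
  -- feasibility of the hat point
  have hfeas : F xh yh = F yA yB := by
    have hhom := hF.homog (yA / yB * (1 - pA)) (1 - pB) (yA / yB) 1 yB
      (mul_pos hβ h1A) h1B hβ one_pos hyB hFeq0
    have e1 : yB * (yA / yB * (1 - pA)) = xh := by
      rw [hxhdef]; field_simp
    have e2 : yB * (1 - pB) = yh := rfl
    have e3 : yB * (yA / yB) = yA := by field_simp
    have e4 : yB * 1 = yB := mul_one yB
    rw [e1, e2, e3, e4] at hhom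
    exact hhom
  have hxA : yA - DhatA = xh := by rw [hDA, hxhdef]; ring
  have hyB' : yB - DhatB = yh := by rw [hDB, hyhdef]; ring
  have hDApos : 0 < DhatA := by rw [hDA]; exact mul_pos hpA0 hyA
  have hDBneg : DhatB < 0 := by rw [hDB]; exact mul_neg_of_neg_of_pos hpB hyB
  -- the marginal rate at the hat point
  have hkpos : 0 < a / b / (1 + f) := div_pos hα h1f
  have hGk : G (xh / yh) = a / b / (1 + f) := by
    have hxy : xh / yh = Ginv (a / b / (1 + f)) := by
      have h1 : xh / yh = yA / yB * ((1 - pA) / (1 - pB)) := by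
        rw [hxhdef, hyhdef]
        rw [div_mul_div_comm]
      rw [h1, hrat]
      field_simp
    rw [hxy]
    exact (hGinv _ hkpos).2
  -- objective value at the hat point
  have hobjhat : objective f a b DhatA DhatB = a * DhatA + b * (1 + f) * DhatB := by
    rw [objective, if_neg (not_lt.2 hDApos.le), if_pos hDBneg]
    ring
  -- optimality
  have hopt : ∀ DA DB : ℝ, F (yA - DA) (yB - DB) = F yA yB →
      0 < yA - DA → 0 < yB - DB → (DA, DB) ≠ (DhatA, DhatB) →
      objective f a b DA DB < objective f a b DhatA DhatB := by
    intro DA DB hfe hxp hyp hne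
    set x : ℝ := yA - DA with hxdef
    set y : ℝ := yB - DB with hydef
    have hFeq' : F x y = F xh yh := by rw [hfe, hfeas]
    have hne' : x ≠ xh ∨ y ≠ yh := by
      by_contra hcc
      push_neg at hcc
      apply hne
      have h1 : DA = DhatA := by
        have e := hcc.1
        rw [hxdef, hxhdef] at e
        rw [hDA]
        linear_combination -e
      have h2 : DB = DhatB := by
        have e := hcc.2
        rw [hydef, hyhdef] at e
        rw [hDB]
        linear_combination -e
      rw [h1, h2]
    have hkey := key_min F Fx Fy hF hkpos hxh hyh hGk hxp hyp hFeq' hne'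
    have hbf : 0 < b * (1 + f) := mul_pos hb h1f
    have hka : a / b / (1 + f) * (b * (1 + f)) = a := by field_simp
    have hmul := mul_lt_mul_of_pos_left hkey hbf
    have he : ∀ t s : ℝ, b * (1 + f) * (a / b / (1 + f) * t + s)
        = a * t + b * (1 + f) * s := by
      intro t s; field_simp
    rw [he xh yh, he x y] at hmul
    have hlin : a * xh + b * (1 + f) * yh < a * x + b * (1 + f) * y := hmul
    have hub : objective f a b DA DB ≤ a * DA + b * (1 + f) * DB :=
      obj_le f a b DA DB hf ha hb
    have hx' : DA = yA - x := by rw [hxdef]; ring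
    have hy' : DB = yB - y := by rw [hydef]; ring
    have hxh' : DhatA = yA - xh := by rw [hDA, hxhdef]; ring
    have hyh' : DhatB = yB - yh := by rw [hDB, hyhdef]; ring
    rw [hobjhat]
    calc objective f a b DA DB ≤ a * DA + b * (1 + f) * DB := hub
      _ < a * DhatA + b * (1 + f) * DhatB := by
          rw [hx', hy', hxh', hyh']
          exact lin_helper a (b * (1 + f)) x y xh yh yA yB hlin
  refine ⟨⟨by rw [hxA, hyB']; exact hfeas, by rw [hxA]; exact hxh,
    by rw [hyB']; exact hyh⟩, hDApos, hDBneg, ?_, hopt⟩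
  have h00 : objective f a b 0 0 = 0 := by simp [objective]
  have hfeas0 : F (yA - 0) (yB - 0) = F yA yB := by rw [sub_zero, sub_zero]
  have hne0 : ((0:ℝ), (0:ℝ)) ≠ (DhatA, DhatB) := by
    intro h
    rw [Prod.ext_iff] at h
    exact absurd h.1.symm (ne_of_gt hDApos)
  have := hopt 0 0 hfeas0 (by simpa using hyA) (by simpa using hyB) hne0
  rw [h00] at this
  exact this
end

section
/- Let F be a pricing function with marginal-rate function G, let β>0 and K ∈ (0,1], and let h : [0,K) → ℝ be a differentiable function with h(0) = 0 and F(β(1−z), 1−h(z)) = F(β, 1) for all z ∈ [0,K). Then for every z ∈ [0,K), h'(z) = −β·G(β(1−z)/(1−h(z))); moreover h' is strictly decreasing on [0,K) (so h is strictly decreasing and strictly concave there), and h'(0) = −β·G(β). -/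
open Set Filter Topology

/-- Continuity of `Fx` plus the 1D partial derivatives give full (Fréchet)
differentiability of `F` on the open positive quadrant. -/
lemma pricing_hasFDerivAt {F Fx Fy : ℝ → ℝ → ℝ} {G G' : ℝ → ℝ}
    (hF : PricingFunction F Fx Fy G G') {x y : ℝ} (hx : 0 < x) (hy : 0 < y) :
    HasFDerivAt (fun p : ℝ × ℝ => F p.1 p.2)
      (Fx x y • (ContinuousLinearMap.fst ℝ ℝ ℝ) + Fy x y • (ContinuousLinearMap.snd ℝ ℝ ℝ))
      (x, y) := by
  rw [hasFDerivAt_iff_isLittleO_nhds_zero]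
  rw [Asymptotics.isLittleO_iff]
  intro c hc
  set ε := c / 2 with hε
  have hεpos : 0 < ε := by positivity
  -- continuity of Fx near (x,y), plus membership in the open quadrant
  have hopen : IsOpen (Ioi (0:ℝ) ×ˢ Ioi (0:ℝ)) := (isOpen_Ioi).prod isOpen_Ioi
  have hmem : (x, y) ∈ Ioi (0:ℝ) ×ˢ Ioi (0:ℝ) := ⟨hx, hy⟩
  have hcontX : ContinuousAt (fun p : ℝ × ℝ => Fx p.1 p.2) (x, y) :=
    hF.contX.continuousAt (hopen.mem_nhds hmem)
  have h1 : ∀ᶠ p : ℝ × ℝ in 𝓝 (x, y),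
      ‖Fx p.1 p.2 - Fx x y‖ ≤ ε ∧ p ∈ Ioi (0:ℝ) ×ˢ Ioi (0:ℝ) := by
    filter_upwards [hcontX (Metric.closedBall_mem_nhds _ hεpos),
      hopen.mem_nhds hmem] with p hp hp'
    refine ⟨?_, hp'⟩
    simpa [Real.dist_eq] using Metric.mem_closedBall.mp hp
  obtain ⟨δ₁, hδ₁pos, hδ₁⟩ := Metric.eventually_nhds_iff.mp h1
  -- the y-partial at (x,y)
  have h2 : ∀ᶠ v : ℝ in 𝓝 y, ‖F x v - F x y - (v - y) • Fy x y‖ ≤ ε * ‖v - y‖ :=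
    Asymptotics.isLittleO_iff.mp
      (hasDerivAt_iff_isLittleO.mp (hF.partialY x y hx hy)) hεpos
  obtain ⟨δ₂, hδ₂pos, hδ₂⟩ := Metric.eventually_nhds_iff.mp h2
  set δ := min δ₁ δ₂ with hδ
  have hδpos : 0 < δ := lt_min hδ₁pos hδ₂pos
  rw [Metric.eventually_nhds_iff]
  refine ⟨δ, hδpos, fun p hp => ?_⟩
  obtain ⟨a, b⟩ := p
  simp only [dist_zero_right] at hp
  have hap : ‖a‖ ≤ ‖((a,b) : ℝ × ℝ)‖ := by simpa using norm_fst_le ((a,b) : ℝ × ℝ)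
  have hbp : ‖b‖ ≤ ‖((a,b) : ℝ × ℝ)‖ := by simpa using norm_snd_le ((a,b) : ℝ × ℝ)
  have ha1 : ‖a‖ < δ₁ := lt_of_le_of_lt hap (lt_of_lt_of_le hp (min_le_left _ _))
  have hb1 : ‖b‖ < δ₁ := lt_of_le_of_lt hbp (lt_of_lt_of_le hp (min_le_left _ _))
  have hb2 : ‖b‖ < δ₂ := lt_of_le_of_lt hbp (lt_of_lt_of_le hp (min_le_right _ _))
  -- the second (vertical) increment
  have key2 : ‖F x (y + b) - F x y - b • Fy x y‖ ≤ ε * ‖b‖ := by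
    have := hδ₂ (y := y + b) (by simpa [Real.dist_eq] using hb2)
    simpa using this
  -- the first (horizontal) increment, via the mean value inequality
  have key1 : ‖F (x + a) (y + b) - F x (y + b) - Fx x y * a‖ ≤ ε * ‖a‖ := by
    set s : Set ℝ := Metric.ball x δ₁ with hs
    have hins : ∀ t ∈ s, dist ((t, y + b) : ℝ × ℝ) (x, y) < δ₁ := by
      intro t ht
      have h1 : dist t x < δ₁ := Metric.mem_ball.mp ht
      have h2' : dist (y + b) y < δ₁ := by simpa [Real.dist_eq] using hb1
      calc dist ((t, y + b) : ℝ × ℝ) (x, y) = max (dist t x) (dist (y + b) y) := rfl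
        _ < δ₁ := max_lt h1 h2'
    have hderiv : ∀ t ∈ s, HasDerivWithinAt (fun u => F u (y + b) - Fx x y * u)
        (Fx t (y + b) - Fx x y) s t := by
      intro t ht
      have hpos := (hδ₁ (hins t ht)).2
      have hd1 : HasDerivAt (fun u => F u (y + b)) (Fx t (y + b)) t :=
        hF.partialX t (y + b) hpos.1 hpos.2
      have hd2 : HasDerivAt (fun u => Fx x y * u) (Fx x y) t := by
        simpa using (hasDerivAt_id t).const_mul (Fx x y)
      exact (hd1.sub hd2).hasDerivWithinAt
    have hbound : ∀ t ∈ s, ‖Fx t (y + b) - Fx x y‖ ≤ ε := by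
      intro t ht
      exact (hδ₁ (hins t ht)).1
    have hxs : x ∈ s := Metric.mem_ball_self hδ₁pos
    have hxas : x + a ∈ s := by
      rw [hs, Metric.mem_ball]
      simpa [Real.dist_eq] using ha1
    have := (convex_ball x δ₁).norm_image_sub_le_of_norm_hasDerivWithin_le
      hderiv hbound hxs hxas
    have heq : (fun u => F u (y + b) - Fx x y * u) (x + a)
        - (fun u => F u (y + b) - Fx x y * u) x
        = F (x + a) (y + b) - F x (y + b) - Fx x y * a := by ring_nf
    rw [heq] at this
    simpa using this
  -- combine
  have hsplit : F (x + a) (y + b) - F x y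
      - ((Fx x y • (ContinuousLinearMap.fst ℝ ℝ ℝ)
        + Fy x y • (ContinuousLinearMap.snd ℝ ℝ ℝ)) (a, b))
      = (F (x + a) (y + b) - F x (y + b) - Fx x y * a)
        + (F x (y + b) - F x y - b • Fy x y) := by
    simp [ContinuousLinearMap.add_apply, smul_eq_mul]
    ring
  calc ‖F (x + a) (y + b) - F x y
      - ((Fx x y • (ContinuousLinearMap.fst ℝ ℝ ℝ)
        + Fy x y • (ContinuousLinearMap.snd ℝ ℝ ℝ)) (a, b))‖
      = ‖(F (x + a) (y + b) - F x (y + b) - Fx x y * a)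
        + (F x (y + b) - F x y - b • Fy x y)‖ := by rw [hsplit]
    _ ≤ ‖F (x + a) (y + b) - F x (y + b) - Fx x y * a‖
        + ‖F x (y + b) - F x y - b • Fy x y‖ := norm_add_le _ _
    _ ≤ ε * ‖a‖ + ε * ‖b‖ := add_le_add key1 key2
    _ ≤ ε * ‖((a,b) : ℝ × ℝ)‖ + ε * ‖((a,b) : ℝ × ℝ)‖ := by
        gcongr
    _ = c * ‖((a,b) : ℝ × ℝ)‖ := by rw [hε]; ring

/-- Properties of the implicit trading curve `h`: if `h(0) = 0` and
`F(β(1−z), 1−h(z)) = F(β,1)` on `[0,K)`, then `h'(z) = −β·G(β(1−z)/(1−h(z)))`,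
`h'` is strictly decreasing (so `h` is strictly decreasing and strictly concave),
and `h'(0) = −β·G(β)`. -/
theorem stmt8 (F Fx Fy : ℝ → ℝ → ℝ) (G G' : ℝ → ℝ)
    (hF : PricingFunction F Fx Fy G G')
    (β K : ℝ) (hβ : 0 < β) (hK : K ∈ Ioc (0:ℝ) 1)
    (h : ℝ → ℝ) (hh0 : h 0 = 0)
    (hdiff : ∀ z ∈ Ico (0:ℝ) K, DifferentiableAt ℝ h z)
    (hlt : ∀ z ∈ Ico (0:ℝ) K, h z < 1)
    (heq : ∀ z ∈ Ico (0:ℝ) K, F (β * (1 - z)) (1 - h z) = F β 1) :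
    (∀ z ∈ Ico (0:ℝ) K, deriv h z = -β * G (β * (1 - z) / (1 - h z))) ∧
    StrictAntiOn (deriv h) (Ico 0 K) ∧
    StrictAntiOn h (Ico 0 K) ∧
    StrictConcaveOn ℝ (Ico 0 K) h ∧
    deriv h 0 = -β * G β := by
  obtain ⟨hK0, hK1⟩ := hK
  have hxz : ∀ z ∈ Ico (0:ℝ) K, 0 < β * (1 - z) := by
    intro z hz
    have : z < 1 := lt_of_lt_of_le hz.2 hK1
    nlinarith
  have hyz : ∀ z ∈ Ico (0:ℝ) K, 0 < 1 - h z := fun z hz => by linarith [hlt z hz]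
  -- G positive on the positive reals
  have hGpos : ∀ u : ℝ, 0 < u → 0 < G u := by
    intro u hu
    have := hF.ratio u 1 hu one_pos
    rw [div_one] at this
    rw [← this]
    exact div_pos (hF.posX u 1 hu one_pos) (hF.posY u 1 hu one_pos)
  -- the derivative formula
  have hderiv : ∀ z ∈ Ico (0:ℝ) K, deriv h z = -β * G (β * (1 - z) / (1 - h z)) := by
    intro z hz
    have hx := hxz z hz
    have hy := hyz z hz
    -- the curve
    have hc : HasDerivAt (fun t => ((β * (1 - t), 1 - h t) : ℝ × ℝ))
        (-β, -deriv h z) z := by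
      have h1 : HasDerivAt (fun t => β * (1 - t)) (-β) z := by
        simpa using ((hasDerivAt_const z (1:ℝ)).sub (hasDerivAt_id z)).const_mul β
      have h2 : HasDerivAt (fun t => 1 - h t) (-deriv h z) z := by
        exact ((hasDerivAt_const z (1:ℝ)).sub ((hdiff z hz).hasDerivAt)).congr_deriv (by simp)
      exact h1.prodMk h2
    have hcomp : HasDerivAt (fun t => F (β * (1 - t)) (1 - h t))
        (Fx (β * (1 - z)) (1 - h z) * (-β) + Fy (β * (1 - z)) (1 - h z) * (-deriv h z)) z := by
      have := (pricing_hasFDerivAt hF hx hy).comp_hasDerivAt z hc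
      simpa [ContinuousLinearMap.add_apply, smul_eq_mul, Function.comp_def] using this
    -- the composition is constant on `Ico 0 K`
    have hconst : HasDerivWithinAt (fun t => F (β * (1 - t)) (1 - h t)) 0 (Ico 0 K) z := by
      have : Set.EqOn (fun t => F (β * (1 - t)) (1 - h t)) (fun _ => F β 1) (Ico 0 K) :=
        fun t ht => heq t ht
      exact (hasDerivWithinAt_const z _ (F β 1)).congr this (heq z hz)
    have hud : UniqueDiffWithinAt ℝ (Ico (0:ℝ) K) z := uniqueDiffOn_Ico 0 K z hz
    have hzero : Fx (β * (1 - z)) (1 - h z) * (-β)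
        + Fy (β * (1 - z)) (1 - h z) * (-deriv h z) = 0 := by
      have e1 := (hcomp.hasDerivWithinAt (s := Ico (0:ℝ) K)).derivWithin hud
      have e2 := hconst.derivWithin hud
      rw [e1] at e2
      exact e2
    have hFy : Fy (β * (1 - z)) (1 - h z) ≠ 0 := ne_of_gt (hF.posY _ _ hx hy)
    have hr := hF.ratio (β * (1 - z)) (1 - h z) hx hy
    have : deriv h z = -β * (Fx (β * (1 - z)) (1 - h z) / Fy (β * (1 - z)) (1 - h z)) := by
      field_simp at hzero ⊢
      linarith
    rw [this, hr]
  -- h is strictly decreasing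
  have hcont : ContinuousOn h (Ico 0 K) := fun z hz =>
    (hdiff z hz).continuousAt.continuousWithinAt
  have hderivneg : ∀ z ∈ interior (Ico (0:ℝ) K), deriv h z < 0 := by
    intro z hz
    rw [interior_Ico] at hz
    have hz' : z ∈ Ico (0:ℝ) K := ⟨le_of_lt hz.1, hz.2⟩
    rw [hderiv z hz']
    have := hGpos _ (div_pos (hxz z hz') (hyz z hz'))
    nlinarith
  have hanti : StrictAntiOn h (Ico 0 K) :=
    strictAntiOn_of_deriv_neg (convex_Ico 0 K) hcont hderivneg
  -- G is strictly decreasing on the positive reals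
  have hGanti : StrictAntiOn G (Ioi 0) := by
    apply strictAntiOn_of_deriv_neg (convex_Ioi 0)
    · exact fun u hu => (hF.derivG u hu).continuousAt.continuousWithinAt
    · intro u hu
      rw [interior_Ioi] at hu
      rw [(hF.derivG u hu).deriv]
      exact hF.negG' u hu
  -- the argument of G is strictly decreasing
  have huanti : ∀ z₁ ∈ Ico (0:ℝ) K, ∀ z₂ ∈ Ico (0:ℝ) K, z₁ < z₂ →
      β * (1 - z₂) / (1 - h z₂) < β * (1 - z₁) / (1 - h z₁) := by
    intro z₁ hz₁ z₂ hz₂ hlt'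
    have hh : h z₂ < h z₁ := hanti hz₁ hz₂ hlt'
    rw [div_lt_div_iff₀ (hyz z₂ hz₂) (hyz z₁ hz₁)]
    have h1z₁ : 0 < 1 - z₁ := by
      have := lt_of_lt_of_le hz₁.2 hK1; linarith
    nlinarith [mul_pos hβ (mul_pos (sub_pos.mpr hlt') (hyz z₁ hz₁)),
      mul_pos hβ (mul_pos h1z₁ (sub_pos.mpr hh))]
  have hderivanti : StrictAntiOn (deriv h) (Ico 0 K) := by
    intro z₁ hz₁ z₂ hz₂ hlt'
    rw [hderiv z₁ hz₁, hderiv z₂ hz₂]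
    have h1 := huanti z₁ hz₁ z₂ hz₂ hlt'
    have h2 : G (β * (1 - z₁) / (1 - h z₁)) < G (β * (1 - z₂) / (1 - h z₂)) :=
      hGanti (div_pos (hxz z₂ hz₂) (hyz z₂ hz₂)) (div_pos (hxz z₁ hz₁) (hyz z₁ hz₁)) h1
    nlinarith
  -- strict concavity
  have hconc : StrictConcaveOn ℝ (Ico 0 K) h := by
    apply StrictAntiOn.strictConcaveOn_of_deriv (convex_Ico 0 K) hcont
    rw [interior_Ico]
    exact fun a ha b hb hab =>
      hderivanti ⟨le_of_lt ha.1, ha.2⟩ ⟨le_of_lt hb.1, hb.2⟩ hab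
  refine ⟨hderiv, hderivanti, hanti, hconc, ?_⟩
  have h0 : (0:ℝ) ∈ Ico (0:ℝ) K := ⟨le_refl 0, hK0⟩
  rw [hderiv 0 h0, hh0]
  norm_num
end

section
/- Let η ∈ (0,1), f > 0, α,β > 0, and set s = η/((1−η)αβ). (a) If s < 1/(1+f), then (d^A, d^B) = (1 − (s(1+f))^{1−η}, 1 − (s(1+f))^{−η}) is the unique pair with d^A ∈ (0,1) and d^B < 0 satisfying (1−d^A)/(1−d^B) = η/((1−η)·β·(α/(1+f))) and (β(1−d^A))^η (1−d^B)^{1−η} = β^η. (b) If s > 1+f, then (d^A, d^B) = (1 − (s/(1+f))^{1−η}, 1 − (s/(1+f))^{−η}) is the unique pair with d^A < 0 and d^B ∈ (0,1) satisfying (1−d^A)/(1−d^B) = η/((1−η)·β·(α(1+f))) and (β(1−d^A))^η (1−d^B)^{1−η} = β^η. -/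
open Set Filter Topology Real

lemma aux_eq (η β t : ℝ) (hη0 : 0 < η) (hη1 : η < 1) (hβ : 0 < β) (ht : 0 < t) :
    (β * t ^ (1 - η)) ^ η * (t ^ (-η)) ^ (1 - η) = β ^ η := by
  rw [Real.mul_rpow hβ.le (Real.rpow_nonneg ht.le _),
      ← Real.rpow_mul ht.le, ← Real.rpow_mul ht.le, mul_assoc,
      ← Real.rpow_add ht]
  ring_nf
  simp

lemma aux_uniq (η β t a b : ℝ) (hη0 : 0 < η) (hη1 : η < 1) (hβ : 0 < β) (ht : 0 < t)
    (ha : 0 < a) (hb : 0 < b) (h1 : a / b = t)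
    (h2 : (β * a) ^ η * b ^ (1 - η) = β ^ η) :
    a = t ^ (1 - η) ∧ b = t ^ (-η) := by
  have ha' : a = t * b := by field_simp at h1; linarith [h1]
  rw [Real.mul_rpow hβ.le ha.le] at h2
  have hb1 : t ^ η * b = 1 := by
    have hβη : (0:ℝ) < β ^ η := Real.rpow_pos_of_pos hβ _
    have h3 : a ^ η * b ^ (1 - η) = 1 := by
      have := h2
      field_simp at this
      nlinarith [this]
    rw [ha', Real.mul_rpow ht.le hb.le, mul_assoc, ← Real.rpow_add hb] at h3
    simpa using h3
  have hbval : b = t ^ (-η) := by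
    rw [Real.rpow_neg ht.le]
    have htη : (0:ℝ) < t ^ η := Real.rpow_pos_of_pos ht _
    field_simp
    linarith [hb1]
  refine ⟨?_, hbval⟩
  rw [ha', hbval]
  rw [show t * t ^ (-η) = t ^ (1:ℝ) * t ^ (-η) by rw [Real.rpow_one],
      ← Real.rpow_add ht]
  ring_nf

/-- Explicit optimal trading fractions for the CGMMM with weight `η`, fee `f`,
believed rate `α`, deposit ratio `β`, and `s = η/((1−η)αβ)`:
(a) if `s < 1/(1+f)`, the pair `(1−(s(1+f))^{1−η}, 1−(s(1+f))^{−η})` is the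
unique pair with `dᴬ ∈ (0,1)`, `dᴮ < 0` solving the first-order and pricing
equations; (b) if `s > 1+f`, the pair `(1−(s/(1+f))^{1−η}, 1−(s/(1+f))^{−η})`
is the unique pair with `dᴬ < 0`, `dᴮ ∈ (0,1)` solving the corresponding
equations. -/
theorem stmt14 (η f α β : ℝ) (hη : η ∈ Ioo (0:ℝ) 1) (hf : 0 < f)
    (hα : 0 < α) (hβ : 0 < β) :
    let s := η / ((1 - η) * α * β)
    ((s < 1 / (1 + f)) →
      let dA := 1 - (s * (1 + f)) ^ (1 - η)
      let dB := 1 - (s * (1 + f)) ^ (-η)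
      dA ∈ Ioo (0:ℝ) 1 ∧ dB < 0 ∧
      (1 - dA) / (1 - dB) = η / ((1 - η) * β * (α / (1 + f))) ∧
      (β * (1 - dA)) ^ η * (1 - dB) ^ (1 - η) = β ^ η ∧
      (∀ dA' dB' : ℝ, dA' ∈ Ioo (0:ℝ) 1 → dB' < 0 →
        (1 - dA') / (1 - dB') = η / ((1 - η) * β * (α / (1 + f))) →
        (β * (1 - dA')) ^ η * (1 - dB') ^ (1 - η) = β ^ η →
        dA' = dA ∧ dB' = dB)) ∧
    ((1 + f < s) →
      let dA := 1 - (s / (1 + f)) ^ (1 - η)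
      let dB := 1 - (s / (1 + f)) ^ (-η)
      dA < 0 ∧ dB ∈ Ioo (0:ℝ) 1 ∧
      (1 - dA) / (1 - dB) = η / ((1 - η) * β * (α * (1 + f))) ∧
      (β * (1 - dA)) ^ η * (1 - dB) ^ (1 - η) = β ^ η ∧
      (∀ dA' dB' : ℝ, dA' < 0 → dB' ∈ Ioo (0:ℝ) 1 →
        (1 - dA') / (1 - dB') = η / ((1 - η) * β * (α * (1 + f))) →
        (β * (1 - dA')) ^ η * (1 - dB') ^ (1 - η) = β ^ η →
        dA' = dA ∧ dB' = dB)) := by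

  have hη0 := hη.1
  have hη1 := hη.2
  have hη' : (0:ℝ) < 1 - η := by linarith
  have hf1 : (0:ℝ) < 1 + f := by linarith
  have hs : 0 < η / ((1 - η) * α * β) := by positivity
  have hne1 : (1 - η) ≠ 0 := ne_of_gt hη'
  have hne2 : α ≠ 0 := ne_of_gt hα
  have hne3 : β ≠ 0 := ne_of_gt hβ
  have hne4 : (1 + f) ≠ 0 := ne_of_gt hf1
  intro s
  constructor
  · intro hlt dA dB
    set t := s * (1 + f) with htdef
    have ht : 0 < t := by positivity
    have ht1 : t < 1 := by
      rw [htdef]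
      have := mul_lt_mul_of_pos_right hlt hf1
      rwa [one_div_mul_cancel (ne_of_gt hf1)] at this
    have hteq : t = η / ((1 - η) * β * (α / (1 + f))) := by
      rw [htdef]; show η / ((1 - η) * α * β) * (1 + f) = _
      field_simp
    have hA : (0:ℝ) < t ^ (1 - η) := Real.rpow_pos_of_pos ht _
    have hA1 : t ^ (1 - η) < 1 := Real.rpow_lt_one ht.le ht1 (by linarith)
    have hB : 1 < t ^ (-η) :=
      (Real.one_lt_rpow_iff_of_pos ht).mpr (Or.inr ⟨ht1, by linarith⟩)
    have hdA : dA = 1 - t ^ (1 - η) := rfl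
    have hdB : dB = 1 - t ^ (-η) := rfl
    have h1A : 1 - dA = t ^ (1 - η) := by rw [hdA]; ring
    have h1B : 1 - dB = t ^ (-η) := by rw [hdB]; ring
    refine ⟨⟨by rw [hdA]; linarith, by rw [hdA]; linarith⟩, by rw [hdB]; linarith, ?_, ?_, ?_⟩
    · rw [h1A, h1B, ← Real.rpow_sub ht, show (1 - η - -η) = (1:ℝ) by ring,
        Real.rpow_one, hteq]
    · rw [h1A, h1B]; exact aux_eq η β t hη0 hη1 hβ ht
    · intro dA' dB' hA' hB' e1 e2
      rw [← hteq] at e1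
      obtain ⟨qa, qb⟩ := aux_uniq η β t (1 - dA') (1 - dB') hη0 hη1 hβ ht
        (by linarith [hA'.2]) (by linarith) e1 e2
      constructor
      · rw [hdA]; linarith
      · rw [hdB]; linarith
  · intro hlt dA dB
    set t := s / (1 + f) with htdef
    have ht : 0 < t := by positivity
    have ht1 : 1 < t := by
      rw [htdef, lt_div_iff₀ hf1]; nlinarith [hlt]
    have hteq : t = η / ((1 - η) * β * (α * (1 + f))) := by
      rw [htdef]; show η / ((1 - η) * α * β) / (1 + f) = _
      rw [div_div]; congr 1; ring
    have hA : 1 < t ^ (1 - η) := Real.one_lt_rpow_iff_of_pos ht |>.mpr (Or.inl ⟨ht1, by linarith⟩)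
    have hB0 : (0:ℝ) < t ^ (-η) := Real.rpow_pos_of_pos ht _
    have hB1 : t ^ (-η) < 1 := Real.rpow_lt_one_of_one_lt_of_neg ht1 (by linarith)
    have hdA : dA = 1 - t ^ (1 - η) := rfl
    have hdB : dB = 1 - t ^ (-η) := rfl
    have h1A : 1 - dA = t ^ (1 - η) := by rw [hdA]; ring
    have h1B : 1 - dB = t ^ (-η) := by rw [hdB]; ring
    refine ⟨by rw [hdA]; linarith, ⟨by rw [hdB]; linarith, by rw [hdB]; linarith⟩, ?_, ?_, ?_⟩
    · rw [h1A, h1B, ← Real.rpow_sub ht, show (1 - η - -η) = (1:ℝ) by ring,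
        Real.rpow_one, hteq]
    · rw [h1A, h1B]; exact aux_eq η β t hη0 hη1 hβ ht
    · intro dA' dB' hA' hB' e1 e2
      rw [← hteq] at e1
      obtain ⟨qa, qb⟩ := aux_uniq η β t (1 - dA') (1 - dB') hη0 hη1 hβ ht
        (by linarith) (by linarith [hB'.2]) e1 e2
      constructor
      · rw [hdA]; linarith
      · rw [hdB]; linarith
end

section
/- Let η ∈ (0,1) and f > 0, and define H̄(s) = (1 + f(1 − (s(1+f))^η))/(1+f) for s ∈ (0, 1/(1+f)), and H̄(s) = (1+f)/(1 + f(1 − (s/(1+f))^{η−1})) for s > 1+f. Then: (a) for every s ∈ (0, 1/(1+f)), H̄(s) ∈ (1/(1+f), 1), and H̄ is strictly decreasing on (0, 1/(1+f)); (b) for every s > 1+f, H̄(s) ∈ (1, 1+f), and H̄ is strictly decreasing on (1+f, ∞). In particular, the post-trade exchange rate ratio always lies in the interior of the no-trading region [1/(1+f), 1+f], and it is strictly decreasing in the pre-trade ratio outside that region. -/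
open Set Filter Topology Real

/-- Properties of the CGMMM exchange-rate-ratio transition function `H̄` outside
the no-trading region: (a) on `(0, 1/(1+f))`, `H̄(s) ∈ (1/(1+f), 1)` and `H̄` is
strictly decreasing; (b) on `(1+f, ∞)`, `H̄(s) ∈ (1, 1+f)` and `H̄` is strictly
decreasing. -/
theorem stmt15 (η f : ℝ) (hη : η ∈ Ioo (0:ℝ) 1) (hf : 0 < f) :
    let H₁ : ℝ → ℝ := fun s => (1 + f * (1 - (s * (1 + f)) ^ η)) / (1 + f)
    let H₂ : ℝ → ℝ := fun s => (1 + f) / (1 + f * (1 - (s / (1 + f)) ^ (η - 1)))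
    (∀ s ∈ Ioo (0:ℝ) (1 / (1 + f)), H₁ s ∈ Ioo (1 / (1 + f)) 1) ∧
    StrictAntiOn H₁ (Ioo (0:ℝ) (1 / (1 + f))) ∧
    (∀ s ∈ Ioi (1 + f), H₂ s ∈ Ioo 1 (1 + f)) ∧
    StrictAntiOn H₂ (Ioi (1 + f)) := by
  obtain ⟨hη0, hη1⟩ := hη
  intro H₁ H₂
  have hf1 : (0:ℝ) < 1 + f := by linarith
  have key1 : ∀ s ∈ Ioo (0:ℝ) (1 / (1 + f)),
      (0:ℝ) < (s * (1 + f)) ^ η ∧ (s * (1 + f)) ^ η < 1 := by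
    intro s hs
    obtain ⟨hs0, hs1⟩ := hs
    have hb0 : 0 < s * (1 + f) := mul_pos hs0 hf1
    have hb1 : s * (1 + f) < 1 := (lt_div_iff₀ hf1).mp hs1
    exact ⟨Real.rpow_pos_of_pos hb0 η, Real.rpow_lt_one hb0.le hb1 hη0⟩
  have key2 : ∀ s ∈ Ioi (1 + f),
      (0:ℝ) < (s / (1 + f)) ^ (η - 1) ∧ (s / (1 + f)) ^ (η - 1) < 1 := by
    intro s hs
    have hb1 : 1 < s / (1 + f) := (one_lt_div hf1).mpr hs
    exact ⟨Real.rpow_pos_of_pos (by linarith) _,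
      Real.rpow_lt_one_of_one_lt_of_neg hb1 (by linarith)⟩
  refine ⟨?_, ?_, ?_, ?_⟩
  · intro s hs
    obtain ⟨ht0, ht1⟩ := key1 s hs
    have h1 : 1 < 1 + f * (1 - (s * (1 + f)) ^ η) := by nlinarith
    have h2 : 1 + f * (1 - (s * (1 + f)) ^ η) < 1 + f := by nlinarith
    exact ⟨(div_lt_div_iff_of_pos_right hf1).mpr h1, (div_lt_one hf1).mpr h2⟩
  · intro a ha b hb hab
    have hmono : (a * (1 + f)) ^ η < (b * (1 + f)) ^ η :=
      Real.rpow_lt_rpow (le_of_lt (mul_pos ha.1 hf1))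
        (mul_lt_mul_of_pos_right hab hf1) hη0
    show (1 + f * (1 - (b * (1 + f)) ^ η)) / (1 + f)
        < (1 + f * (1 - (a * (1 + f)) ^ η)) / (1 + f)
    apply (div_lt_div_iff_of_pos_right hf1).mpr
    nlinarith
  · intro s hs
    obtain ⟨ht0, ht1⟩ := key2 s hs
    have h1 : 1 < 1 + f * (1 - (s / (1 + f)) ^ (η - 1)) := by nlinarith
    have h2 : 1 + f * (1 - (s / (1 + f)) ^ (η - 1)) < 1 + f := by nlinarith
    refine ⟨(one_lt_div (by linarith)).mpr h2, ?_⟩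
    rw [div_lt_iff₀ (by linarith)]
    nlinarith
  · intro a ha b hb hab
    obtain ⟨ht0a, ht1a⟩ := key2 a ha
    obtain ⟨ht0b, ht1b⟩ := key2 b hb
    have hmono : (b / (1 + f)) ^ (η - 1) < (a / (1 + f)) ^ (η - 1) :=
      Real.rpow_lt_rpow_of_neg
        (div_pos (lt_trans hf1 ha) hf1)
        ((div_lt_div_iff_of_pos_right hf1).mpr hab) (by linarith)
    have hda : 0 < 1 + f * (1 - (a / (1 + f)) ^ (η - 1)) := by nlinarith
    have hd : 1 + f * (1 - (a / (1 + f)) ^ (η - 1))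
        < 1 + f * (1 - (b / (1 + f)) ^ (η - 1)) := by nlinarith
    exact div_lt_div_of_pos_left hf1 hda hd
end
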